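/- arXiv:2106.11560 — 4 statements merged into one kernel-verified Lean document; each statement's English description precedes it below -/
import Mathlib

section
/- Let G be a semi-Markovian DAG satisfying Assumption 1. Let x_t ∈ X^(o) be a node that has either a directed edge x_t → t or a bi-directed edge to t (i.e., some unobserved node u with edges u → x_t and u → t). Let G_e be the sub-sampled graph built from x_t and an arbitrary subset V_0 ⊆ (X^(o) ∪ {t}) \ {x_t}, and let Z ⊆ X^(o) \ {x_t}. If e and y are d-separated by Z ∪ {t} in G_e, then Z satisfies the back-door criterion relative to (t, y) in G. -/
namespace CausalDAG

variable {V : Type*}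

/-- Adjacency: an edge between `u` and `v` in either direction. -/
def Adj (E : V → V → Prop) (u v : V) : Prop := E u v ∨ E v u

/-- `d` is a descendant of `v`: there is a directed path from `v` to `d`. -/
def Descendant (E : V → V → Prop) (v d : V) : Prop := Relation.TransGen E v d

/-- The directed graph with edge relation `E` is acyclic. -/
def Acyclic (E : V → V → Prop) : Prop := ∀ v, ¬ Relation.TransGen E v v

/-- A path between `a` and `b` in the graph with edge relation `E`:
a sequence of at least two distinct nodes, starting at `a`, ending at `b`,
with consecutive nodes joined by an edge (in either direction). -/
structure GPath (E : V → V → Prop) (a b : V) where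
  nodes : List V
  nodup : nodes.Nodup
  two_le : 2 ≤ nodes.length
  head_eq : nodes.head? = some a
  last_eq : nodes.getLast? = some b
  chain : nodes.Chain' (Adj E)

namespace GPath

variable {E : V → V → Prop} {a b : V}

/-- `i` is an interior position of the path. -/
def Interior (p : GPath E a b) (i : ℕ) : Prop := 0 < i ∧ i + 1 < p.nodes.length

/-- The node at interior position `i` is a collider on the path: both adjacent
edges of the path point into it. -/
def ColliderAt (p : GPath E a b) (i : ℕ) : Prop :=
  ∃ x v z, p.nodes[(i - 1)]? = some x ∧ p.nodes[i]? = some v ∧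
    p.nodes[(i + 1)]? = some z ∧ E x v ∧ E z v

/-- The path is blocked by the set `S`. -/
def BlockedBy (p : GPath E a b) (S : Set V) : Prop :=
  ∃ i v, p.Interior i ∧ p.nodes[i]? = some v ∧
    ((¬ p.ColliderAt i ∧ v ∈ S) ∨
      (p.ColliderAt i ∧ v ∉ S ∧ ∀ d, Descendant E v d → d ∉ S))

/-- The path contains the directed edge `u → v` as one of its steps. -/
def UsesEdge (p : GPath E a b) (u v : V) : Prop :=
  E u v ∧ ∃ i, (p.nodes[i]? = some u ∧ p.nodes[(i + 1)]? = some v) ∨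
    (p.nodes[i]? = some v ∧ p.nodes[(i + 1)]? = some u)

/-- The path contains an edge pointing into its first endpoint. -/
def IntoFirst (p : GPath E a b) : Prop :=
  ∃ w, p.nodes[1]? = some w ∧ E w a

end GPath

/-- `a` and `b` are d-separated by `S`: every path between them is blocked by `S`. -/
def DSep (E : V → V → Prop) (a b : V) (S : Set V) : Prop :=
  ∀ p : GPath E a b, p.BlockedBy S

/-- `Z` satisfies the back-door criterion relative to `(t, y)`: no node of `Z` is a
descendant of `t`, and `Z` blocks every path between `t` and `y` containing an edge
pointing into `t`. -/
def BackDoor (E : V → V → Prop) (t y : V) (Z : Set V) : Prop :=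
  (∀ z ∈ Z, ¬ Descendant E t z) ∧
  ∀ p : GPath E t y, p.IntoFirst → p.BlockedBy Z

/-- A semi-Markovian DAG: observed features `Xo`, unobserved features `Xu`,
treatment `t`, outcome `y`; unobserved nodes have no parents and at most two
children. -/
structure SemiMarkov (V : Type*) where
  E : V → V → Prop
  Xo : Set V
  Xu : Set V
  t : V
  y : V
  acyclic : Acyclic E
  t_ne_y : t ≠ y
  t_notin : t ∉ Xo ∪ Xu
  y_notin : y ∉ Xo ∪ Xu
  disjoint : Disjoint Xo Xu
  cover : ∀ v, v ∈ Xo ∨ v ∈ Xu ∨ v = t ∨ v = y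
  unobs_no_parents : ∀ u ∈ Xu, ∀ w, ¬ E w u
  unobs_children : ∀ u ∈ Xu, ∃ a b, ∀ c, E u c → c = a ∨ c = b

/-- Assumption 1: `y` is the only child of `t`, and `y` has no children. -/
def Assumption1 (M : SemiMarkov V) : Prop :=
  M.E M.t M.y ∧ (∀ w, M.E M.t w → w = M.y) ∧ ∀ w, ¬ M.E M.y w

/-- Edge relation of the sub-sampled graph `G_e`: a new node `e` (represented by
`none`) is added, together with the edge `x_t → e` and an edge `v → e` for each
`v ∈ V0`. -/
def subEdge (E : V → V → Prop) (xt : V) (V0 : Set V) :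
    Option V → Option V → Prop
  | some u, some v => E u v
  | some u, none => u = xt ∨ u ∈ V0
  | none, _ => False

end CausalDAG


section Aux
open CausalDAG
variable {V : Type*}

lemma aux_adj_some {E : V → V → Prop} {xt : V} {V0 : Set V} {a b : V}
    (h : Adj E a b) : Adj (subEdge E xt V0) (some a) (some b) := by
  rcases h with h | h
  · exact Or.inl h
  · exact Or.inr h

lemma aux_desc_some {E : V → V → Prop} {xt : V} {V0 : Set V} {a b : V}
    (h : Descendant E a b) : Descendant (subEdge E xt V0) (some a) (some b) :=
  Relation.TransGen.lift some (fun _ _ h => h) _ _ h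

lemma aux_suffix_false {M : SemiMarkov V} {xt : V} {V0 : Set V} {Z : Set V}
    (p : GPath M.E M.t M.y) (hnb : ¬ p.BlockedBy Z)
    (pre : List (Option V)) (j : ℕ) (hjlen : j < p.nodes.length)
    (q : GPath (subEdge M.E xt V0) (none : Option V) (some M.y))
    (hq : q.nodes = pre ++ (p.nodes.drop j).map some)
    (i : ℕ) (v : Option V)
    (hint : q.Interior i) (hget : q.nodes[i]? = some v)
    (hgt : pre.length < i)
    (hbl : (¬ q.ColliderAt i ∧ v ∈ some '' (Z ∪ {M.t})) ∨
      (q.ColliderAt i ∧ v ∉ some '' (Z ∪ {M.t}) ∧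
        ∀ d, Descendant (subEdge M.E xt V0) v d → d ∉ some '' (Z ∪ {M.t}))) :
    False := by
  obtain ⟨hi0, hi1⟩ := hint
  have hqget : ∀ r, pre.length ≤ r →
      q.nodes[r]? = (p.nodes[j + (r - pre.length)]?).map some := by
    intro r hr
    rw [hq, List.getElem?_append_right hr, List.getElem?_map, List.getElem?_drop]
  have hlenq : q.nodes.length = pre.length + (p.nodes.length - j) := by
    rw [hq]; simp
  rw [hlenq] at hi1
  set k := j + (i - pre.length) with hkdef
  have hk0 : 0 < k := by omega
  have hk1 : k + 1 < p.nodes.length := by omega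
  have hget3 : ∀ m, m < p.nodes.length → ∃ w, p.nodes[m]? = some w := by
    intro m hm
    cases hcc : p.nodes[m]? with
    | none => exact absurd (List.getElem?_eq_none_iff.mp hcc) (by omega)
    | some w => exact ⟨w, rfl⟩
  obtain ⟨w, hw⟩ := hget3 k (by omega)
  obtain ⟨a, ha⟩ := hget3 (k - 1) (by omega)
  obtain ⟨c, hc⟩ := hget3 (k + 1) (by omega)
  have hvk : q.nodes[i]? = some (some w) := by
    have h := hqget i (le_of_lt hgt)
    rw [← hkdef] at h
    rw [h, hw]
    rfl
  have hv : v = some w := Option.some.inj (hget.symm.trans hvk)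
  have hprevk : q.nodes[i - 1]? = some (some a) := by
    have h := hqget (i - 1) (by omega)
    have e : j + (i - 1 - pre.length) = k - 1 := by omega
    rw [e] at h
    rw [h, ha]
    rfl
  have hnextk : q.nodes[i + 1]? = some (some c) := by
    have h := hqget (i + 1) (by omega)
    have e : j + (i + 1 - pre.length) = k + 1 := by omega
    rw [e] at h
    rw [h, hc]
    rfl
  have hintk : p.Interior k := ⟨hk0, hk1⟩
  have hcoll : q.ColliderAt i ↔ p.ColliderAt k := by
    constructor
    · rintro ⟨x, v', z, hx, hv', hz, hex, hez⟩
      obtain rfl := Option.some.inj (hprevk.symm.trans hx)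
      obtain rfl := Option.some.inj (hvk.symm.trans hv')
      obtain rfl := Option.some.inj (hnextk.symm.trans hz)
      exact ⟨a, w, c, ha, hw, hc, hex, hez⟩
    · rintro ⟨a', w', c', ha', hw', hc', h1, h2⟩
      obtain rfl := Option.some.inj (ha.symm.trans ha')
      obtain rfl := Option.some.inj (hw.symm.trans hw')
      obtain rfl := Option.some.inj (hc.symm.trans hc')
      exact ⟨some a, some w, some c, hprevk, hvk, hnextk, h1, h2⟩
  have h0 : p.nodes[0]? = some M.t := by rw [← List.head?_eq_getElem?]; exact p.head_eq
  have hwt : w ≠ M.t := by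
    intro h
    have : k = 0 := (List.getElem?_inj (by omega) p.nodup).mp (by rw [hw, h, h0])
    omega
  rcases hbl with ⟨hncq, hvS⟩ | ⟨hcq, hvS, hdS⟩
  · obtain ⟨x, hxmem, hxeq⟩ := hvS
    have hxw : x = w := Option.some.inj (hxeq.trans hv)
    subst hxw
    have hwZ : x ∈ Z := by
      rcases hxmem with h | h
      · exact h
      · exact absurd h hwt
    exact hnb ⟨k, x, hintk, hw, Or.inl ⟨fun hcp => hncq (hcoll.mpr hcp), hwZ⟩⟩
  · have hcp := hcoll.mp hcq
    by_cases hwZ : w ∈ Z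
    · exact hvS (by rw [hv]; exact ⟨w, Set.mem_union_left _ hwZ, rfl⟩)
    · by_cases hdd : ∃ d, Descendant M.E w d ∧ d ∈ Z
      · obtain ⟨d, hd1, hd2⟩ := hdd
        exact hdS (some d) (by rw [hv]; exact aux_desc_some hd1)
          ⟨d, Set.mem_union_left _ hd2, rfl⟩
      · push_neg at hdd
        exact hnb ⟨k, w, hintk, hw, Or.inr ⟨hcp, hwZ, fun d h1 h2 => hdd d h1 h2⟩⟩

end Aux

open CausalDAG in
/-- sufficiency, Theorem 1: if `e` and `y` are d-separated by
`Z ∪ {t}` in the sub-sampled graph, then `Z` satisfies the back-door criterion. -/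
theorem stmt0 {V : Type*} [Finite V] (M : SemiMarkov V)
    (hA1 : Assumption1 M)
    (xt : V) (hxt : xt ∈ M.Xo)
    (hedge : M.E xt M.t ∨ ∃ u ∈ M.Xu, M.E u xt ∧ M.E u M.t)
    (V0 : Set V) (hV0 : V0 ⊆ (M.Xo ∪ {M.t}) \ {xt})
    (Z : Set V) (hZ : Z ⊆ M.Xo \ {xt})
    (hdsep : DSep (subEdge M.E xt V0) (none : Option V) (some M.y)
      (some '' (Z ∪ {M.t}))) :
    BackDoor M.E M.t M.y Z := by
  obtain ⟨hty, hchild, hysink⟩ := hA1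
  constructor
  · intro z hzZ hdes
    have hzy : ∀ z', Relation.TransGen M.E M.t z' → z' = M.y := by
      intro z' h
      induction h with
      | single h => exact hchild _ h
      | tail h1 h2 ih => exact absurd (ih ▸ h2) (hysink _)
    have hz := hzy z hdes
    exact M.y_notin (Set.mem_union_left _ (hz ▸ (hZ hzZ).1))
  · intro p hinto
    by_contra hnb
    obtain ⟨w1, hw1get, hw1E⟩ := hinto
    have hlen2 := p.two_le
    have h0 : p.nodes[0]? = some M.t := by rw [← List.head?_eq_getElem?]; exact p.head_eq
    have hlast : p.nodes[p.nodes.length - 1]? = some M.y := by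
      rw [← List.getLast?_eq_getElem?]; exact p.last_eq
    have hLnodup : ∀ j : ℕ, ((p.nodes.drop j).map some).Nodup := fun j =>
      List.Nodup.map (Option.some_injective V)
        (List.Nodup.sublist (List.drop_sublist j p.nodes) p.nodup)
    have hLchain : ∀ j : ℕ,
        List.Chain' (Adj (subEdge M.E xt V0)) ((p.nodes.drop j).map some) := by
      intro j
      rw [List.Chain', List.isChain_map]
      exact List.IsChain.imp (fun a b h => aux_adj_some h) (List.IsChain.drop p.chain j)
    have hnone_notin : ∀ j : ℕ, (none : Option V) ∉ (p.nodes.drop j).map some := by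
      intro j h
      simp only [List.mem_map] at h
      obtain ⟨x, -, hx⟩ := h
      exact nomatch hx
    have hLlen : ∀ j : ℕ, ((p.nodes.drop j).map some).length = p.nodes.length - j := by
      intro j; simp
    have hLlast : ∀ j : ℕ, j < p.nodes.length →
        ((p.nodes.drop j).map some).getLast? = some (some M.y) := by
      intro j hj
      rw [List.getLast?_eq_getElem?, hLlen j, List.getElem?_map, List.getElem?_drop]
      have e : j + (p.nodes.length - j - 1) = p.nodes.length - 1 := by omega
      rw [e, hlast]
      rfl
    have hLhead : ∀ (j : ℕ) (w : V), p.nodes[j]? = some w →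
        ((p.nodes.drop j).map some).head? = some (some w) := by
      intro j w hw
      rw [List.head?_map, List.head?_drop, hw]
      rfl
    have hsomet_S : some M.t ∈ some '' (Z ∪ {M.t}) :=
      ⟨M.t, Set.mem_union_right _ rfl, rfl⟩
    have hxt_notS : (some xt : Option V) ∉ some '' (Z ∪ {M.t}) := by
      rintro ⟨x, hxmem, hxeq⟩
      obtain rfl := Option.some.inj hxeq
      rcases hxmem with h | h
      · exact (hZ h).2 rfl
      · exact M.t_notin (Set.mem_union_left _ (h ▸ hxt))
    have hu_notS : ∀ u ∈ M.Xu, (some u : Option V) ∉ some '' (Z ∪ {M.t}) := by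
      intro u huXu
      rintro ⟨x, hxmem, hxeq⟩
      obtain rfl := Option.some.inj hxeq
      rcases hxmem with h | h
      · exact Set.disjoint_left.mp M.disjoint (hZ h).1 huXu
      · exact M.t_notin (Set.mem_union_right _ (h ▸ huXu))
    have hC1 : xt ∈ p.nodes → False := by
      intro hxtmem
      obtain ⟨j, hj⟩ := List.getElem?_of_mem hxtmem
      have hjlt : j < p.nodes.length := by
        by_contra h
        rw [List.getElem?_eq_none_iff.mpr (Nat.le_of_not_lt h)] at hj
        exact nomatch hj
      have hj0 : j ≠ 0 := by
        intro h
        rw [h, h0] at hj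
        exact M.t_notin (Set.mem_union_left _ ((Option.some.inj hj).symm ▸ hxt))
      have hjy : j ≠ p.nodes.length - 1 := by
        intro h
        rw [h, hlast] at hj
        exact M.y_notin (Set.mem_union_left _ ((Option.some.inj hj).symm ▸ hxt))
      have hj1 : j + 1 < p.nodes.length := by omega
      let qp : GPath (subEdge M.E xt V0) (none : Option V) (some M.y) :=
        { nodes := none :: (p.nodes.drop j).map some
          nodup := by rw [List.nodup_cons]; exact ⟨hnone_notin j, hLnodup j⟩
          two_le := by simp only [List.length_cons, hLlen j]; omega
          head_eq := rfl
          last_eq := by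
            rw [show (none :: (p.nodes.drop j).map some)
                = [none] ++ (p.nodes.drop j).map some from rfl,
              List.getLast?_append, hLlast j hjlt]
            rfl
          chain := by
            rw [List.Chain', List.isChain_cons]
            refine ⟨fun b hb => ?_, hLchain j⟩
            rw [hLhead j xt hj] at hb
            obtain rfl := Option.some.inj hb
            exact Or.inr (Or.inl rfl) }
      have hqn : qp.nodes = none :: (p.nodes.drop j).map some := rfl
      obtain ⟨i, v, hint, hget, hbl⟩ := hdsep qp
      rcases i with _ | _ | m
      · exact absurd hint.1 (lt_irrefl 0)
      · have hv1 : qp.nodes[1]? = some (some xt) := by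
          rw [hqn]
          show ((p.nodes.drop j).map some)[0]? = _
          rw [← List.head?_eq_getElem?, hLhead j xt hj]
        obtain rfl := Option.some.inj (hget.symm.trans hv1)
        rcases hbl with ⟨-, hvS⟩ | ⟨hcq, -, -⟩
        · exact hxt_notS hvS
        · obtain ⟨x, v', z, hx, -, -, hex, -⟩ := hcq
          have hx' : some (none : Option V) = some x := hx
          obtain rfl := Option.some.inj hx'
          exact hex
      · exact aux_suffix_false p hnb [none] j hjlt qp rfl (m + 2) v hint hget
          (by simp only [List.length_cons, List.length_nil]; omega) hbl
    rcases hedge with hA | ⟨u, huXu, huxt, hut⟩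
    · by_cases hxtmem : xt ∈ p.nodes
      · exact hC1 hxtmem
      · -- construction C2 : e ← xt → t ← v1 ⋯ y
        have hxt_notL : (some xt : Option V) ∉ (p.nodes.drop 0).map some := by
          intro h
          obtain ⟨x, hx1, hx2⟩ := List.mem_map.mp h
          exact hxtmem ((Option.some.inj hx2) ▸ List.mem_of_mem_drop hx1)
        let qp : GPath (subEdge M.E xt V0) (none : Option V) (some M.y) :=
          { nodes := none :: some xt :: (p.nodes.drop 0).map some
            nodup := by
              rw [List.nodup_cons, List.nodup_cons]
              refine ⟨?_, hxt_notL, hLnodup 0⟩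
              intro h
              rcases List.mem_cons.mp h with h | h
              · exact nomatch h
              · exact hnone_notin 0 h
            two_le := by simp only [List.length_cons]; omega
            head_eq := rfl
            last_eq := by
              rw [show (none :: some xt :: (p.nodes.drop 0).map some)
                  = [none, some xt] ++ (p.nodes.drop 0).map some from rfl,
                List.getLast?_append, hLlast 0 (by omega)]
              rfl
            chain := by
              rw [List.Chain', List.isChain_cons]
              refine ⟨fun b hb => ?_, ?_⟩
              · have hb' : some (some xt) = some b := hb
                obtain rfl := Option.some.inj hb'
                exact Or.inr (Or.inl rfl)
              · rw [List.isChain_cons]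
                refine ⟨fun b hb => ?_, hLchain 0⟩
                rw [hLhead 0 M.t h0] at hb
                obtain rfl := Option.some.inj hb
                exact Or.inl hA }
        obtain ⟨i, v, hint, hget, hbl⟩ := hdsep qp
        rcases i with _ | _ | _ | m
        · exact absurd hint.1 (lt_irrefl 0)
        · have hv1 : qp.nodes[1]? = some (some xt) := rfl
          obtain rfl := Option.some.inj (hget.symm.trans hv1)
          rcases hbl with ⟨-, hvS⟩ | ⟨hcq, -, -⟩
          · exact hxt_notS hvS
          · obtain ⟨x, v', z, hx, -, -, hex, -⟩ := hcq
            have hx' : some (none : Option V) = some x := hx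
            obtain rfl := Option.some.inj hx'
            exact hex
        · have hv2 : qp.nodes[2]? = some (some M.t) := by
            show ((p.nodes.drop 0).map some)[0]? = _
            rw [← List.head?_eq_getElem?, hLhead 0 M.t h0]
          have hget3 : qp.nodes[3]? = some (some w1) := by
            show ((p.nodes.drop 0).map some)[1]? = _
            rw [List.getElem?_map, List.getElem?_drop]
            have e : (0 : ℕ) + 1 = 1 := rfl
            rw [e, hw1get]
            rfl
          have hv : v = some M.t := Option.some.inj (hget.symm.trans hv2)
          have hcoll : qp.ColliderAt 2 :=
            ⟨some xt, some M.t, some w1, rfl, hv2, hget3, hA, hw1E⟩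
          rcases hbl with ⟨hnc, -⟩ | ⟨-, hvS, -⟩
          · exact hnc hcoll
          · exact hvS (hv.symm ▸ hsomet_S)
        · exact aux_suffix_false p hnb [none, some xt] 0 (by omega) qp rfl (m + 3) v
            hint hget (by simp only [List.length_cons, List.length_nil]; omega) hbl
    · by_cases hxtmem : xt ∈ p.nodes
      · exact hC1 hxtmem
      · by_cases humem : u ∈ p.nodes
        · -- construction C3 : e ← xt ← u(=p_j) ⋯ y
          obtain ⟨j, hj⟩ := List.getElem?_of_mem humem
          have hjlt : j < p.nodes.length := by
            by_contra h
            rw [List.getElem?_eq_none_iff.mpr (Nat.le_of_not_lt h)] at hj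
            exact nomatch hj
          have hj0 : j ≠ 0 := by
            intro h
            rw [h, h0] at hj
            exact M.t_notin (Set.mem_union_right _ ((Option.some.inj hj).symm ▸ huXu))
          have hjy : j ≠ p.nodes.length - 1 := by
            intro h
            rw [h, hlast] at hj
            exact M.y_notin (Set.mem_union_right _ ((Option.some.inj hj).symm ▸ huXu))
          have hj1 : j + 1 < p.nodes.length := by omega
          have hxt_notL : (some xt : Option V) ∉ (p.nodes.drop j).map some := by
            intro h
            obtain ⟨x, hx1, hx2⟩ := List.mem_map.mp h
            exact hxtmem ((Option.some.inj hx2) ▸ List.mem_of_mem_drop hx1)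
          let qp : GPath (subEdge M.E xt V0) (none : Option V) (some M.y) :=
            { nodes := none :: some xt :: (p.nodes.drop j).map some
              nodup := by
                rw [List.nodup_cons, List.nodup_cons]
                refine ⟨?_, hxt_notL, hLnodup j⟩
                intro h
                rcases List.mem_cons.mp h with h | h
                · exact nomatch h
                · exact hnone_notin j h
              two_le := by simp only [List.length_cons]; omega
              head_eq := rfl
              last_eq := by
                rw [show (none :: some xt :: (p.nodes.drop j).map some)
                    = [none, some xt] ++ (p.nodes.drop j).map some from rfl,
                  List.getLast?_append, hLlast j hjlt]
                rfl
              chain := by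
                rw [List.Chain', List.isChain_cons]
                refine ⟨fun b hb => ?_, ?_⟩
                · have hb' : some (some xt) = some b := hb
                  obtain rfl := Option.some.inj hb'
                  exact Or.inr (Or.inl rfl)
                · rw [List.isChain_cons]
                  refine ⟨fun b hb => ?_, hLchain j⟩
                  rw [hLhead j u hj] at hb
                  obtain rfl := Option.some.inj hb
                  exact Or.inr huxt }
          obtain ⟨i, v, hint, hget, hbl⟩ := hdsep qp
          rcases i with _ | _ | _ | m
          · exact absurd hint.1 (lt_irrefl 0)
          · have hv1 : qp.nodes[1]? = some (some xt) := rfl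
            obtain rfl := Option.some.inj (hget.symm.trans hv1)
            rcases hbl with ⟨-, hvS⟩ | ⟨hcq, -, -⟩
            · exact hxt_notS hvS
            · obtain ⟨x, v', z, hx, -, -, hex, -⟩ := hcq
              have hx' : some (none : Option V) = some x := hx
              obtain rfl := Option.some.inj hx'
              exact hex
          · have hv2 : qp.nodes[2]? = some (some u) := by
              show ((p.nodes.drop j).map some)[0]? = _
              rw [← List.head?_eq_getElem?, hLhead j u hj]
            have hv : v = some u := Option.some.inj (hget.symm.trans hv2)
            have hnc : ¬ qp.ColliderAt 2 := by
              rintro ⟨x, v', z, hx, hv', -, hex, -⟩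
              have hx' : some (some xt) = some x := hx
              obtain rfl := Option.some.inj hx'
              obtain rfl := Option.some.inj (hv2.symm.trans hv')
              exact M.unobs_no_parents u huXu xt hex
            rcases hbl with ⟨-, hvS⟩ | ⟨hcq, -, -⟩
            · exact hu_notS u huXu (hv ▸ hvS)
            · exact hnc hcq
          · exact aux_suffix_false p hnb [none, some xt] j hjlt qp rfl (m + 3) v
              hint hget (by simp only [List.length_cons, List.length_nil]; omega) hbl
        · -- construction C4 : e ← xt ← u → t ← v1 ⋯ y
          have hxt_notL : (some xt : Option V) ∉ (p.nodes.drop 0).map some := by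
            intro h
            obtain ⟨x, hx1, hx2⟩ := List.mem_map.mp h
            exact hxtmem ((Option.some.inj hx2) ▸ List.mem_of_mem_drop hx1)
          have hu_notL : (some u : Option V) ∉ (p.nodes.drop 0).map some := by
            intro h
            obtain ⟨x, hx1, hx2⟩ := List.mem_map.mp h
            exact humem ((Option.some.inj hx2) ▸ List.mem_of_mem_drop hx1)
          have hxtu : (some xt : Option V) ≠ some u := by
            intro h
            exact Set.disjoint_left.mp M.disjoint
              ((Option.some.inj h).symm ▸ hxt) huXu
          let qp : GPath (subEdge M.E xt V0) (none : Option V) (some M.y) :=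
            { nodes := none :: some xt :: some u :: (p.nodes.drop 0).map some
              nodup := by
                rw [List.nodup_cons, List.nodup_cons, List.nodup_cons]
                refine ⟨?_, ?_, hu_notL, hLnodup 0⟩
                · intro h
                  rcases List.mem_cons.mp h with h | h
                  · exact nomatch h
                  · rcases List.mem_cons.mp h with h | h
                    · exact nomatch h
                    · exact hnone_notin 0 h
                · intro h
                  rcases List.mem_cons.mp h with h | h
                  · exact hxtu h
                  · exact hxt_notL h
              two_le := by simp only [List.length_cons]; omega
              head_eq := rfl
              last_eq := by
                rw [show (none :: some xt :: some u :: (p.nodes.drop 0).map some)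
                    = [none, some xt, some u] ++ (p.nodes.drop 0).map some from rfl,
                  List.getLast?_append, hLlast 0 (by omega)]
                rfl
              chain := by
                rw [List.Chain', List.isChain_cons]
                refine ⟨fun b hb => ?_, ?_⟩
                · have hb' : some (some xt) = some b := hb
                  obtain rfl := Option.some.inj hb'
                  exact Or.inr (Or.inl rfl)
                · rw [List.isChain_cons]
                  refine ⟨fun b hb => ?_, ?_⟩
                  · have hb' : some (some u) = some b := hb
                    obtain rfl := Option.some.inj hb'
                    exact Or.inr huxt
                  · rw [List.isChain_cons]
                    refine ⟨fun b hb => ?_, hLchain 0⟩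
                    rw [hLhead 0 M.t h0] at hb
                    obtain rfl := Option.some.inj hb
                    exact Or.inl hut }
          obtain ⟨i, v, hint, hget, hbl⟩ := hdsep qp
          rcases i with _ | _ | _ | _ | m
          · exact absurd hint.1 (lt_irrefl 0)
          · have hv1 : qp.nodes[1]? = some (some xt) := rfl
            obtain rfl := Option.some.inj (hget.symm.trans hv1)
            rcases hbl with ⟨-, hvS⟩ | ⟨hcq, -, -⟩
            · exact hxt_notS hvS
            · obtain ⟨x, v', z, hx, -, -, hex, -⟩ := hcq
              have hx' : some (none : Option V) = some x := hx
              obtain rfl := Option.some.inj hx'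
              exact hex
          · have hv2 : qp.nodes[2]? = some (some u) := rfl
            have hv : v = some u := Option.some.inj (hget.symm.trans hv2)
            have hnc : ¬ qp.ColliderAt 2 := by
              rintro ⟨x, v', z, hx, hv', -, hex, -⟩
              have hx' : some (some xt) = some x := hx
              obtain rfl := Option.some.inj hx'
              obtain rfl := Option.some.inj (hv2.symm.trans hv')
              exact M.unobs_no_parents u huXu xt hex
            rcases hbl with ⟨-, hvS⟩ | ⟨hcq, -, -⟩
            · exact hu_notS u huXu (hv ▸ hvS)
            · exact hnc hcq
          · have hv3 : qp.nodes[3]? = some (some M.t) := by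
              show ((p.nodes.drop 0).map some)[0]? = _
              rw [← List.head?_eq_getElem?, hLhead 0 M.t h0]
            have hget4 : qp.nodes[4]? = some (some w1) := by
              show ((p.nodes.drop 0).map some)[1]? = _
              rw [List.getElem?_map, List.getElem?_drop]
              have e : (0 : ℕ) + 1 = 1 := rfl
              rw [e, hw1get]
              rfl
            have hv : v = some M.t := Option.some.inj (hget.symm.trans hv3)
            have hcoll : qp.ColliderAt 3 :=
              ⟨some u, some M.t, some w1, rfl, hv3, hget4, hut, hw1E⟩
            rcases hbl with ⟨hnc, -⟩ | ⟨-, hvS, -⟩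
            · exact hnc hcoll
            · exact hvS (hv.symm ▸ hsomet_S)
          · exact aux_suffix_false p hnb [none, some xt, some u] 0 (by omega) qp rfl
              (m + 4) v hint hget
              (by simp only [List.length_cons, List.length_nil]; omega) hbl
end

section
/- Let G be a semi-Markovian DAG satisfying Assumption 1 in which every parent of t is observed, i.e., pa(t) ⊆ X^(o). Then a set Z ⊆ X^(o) satisfies the back-door criterion relative to (t, y) in G if and only if either (a) pa(t) ⊆ Z, or (b) there exists x_t ∈ pa(t) with x_t ∉ Z such that, in the sub-sampled graph G_e built from x_t and some subset V_0 ⊆ {t}, e and y are d-separated by Z ∪ {t}. -/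
namespace Stmt4Aux
open List Relation

variable {α : Type*}

/-- triple blocking condition -/
def Tri (R : α → α → Prop) (S : Set α) (x v z : α) : Prop :=
  (¬(R x v ∧ R z v) ∧ v ∈ S) ∨
    ((R x v ∧ R z v) ∧ v ∉ S ∧ ∀ d, Relation.TransGen R v d → d ∉ S)

/-- list-level blocking -/
def LBlk (R : α → α → Prop) (S : Set α) (L : List α) : Prop :=
  ∃ l1 x v z l2, L = l1 ++ x :: v :: z :: l2 ∧ Tri R S x v z

lemma getLast?_append_ne {l l' : List α} (h : l' ≠ []) :
    (l ++ l').getLast? = l'.getLast? := by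
  rw [List.getLast?_append]
  rcases l' with _ | ⟨a, l'⟩
  · exact absurd rfl h
  · have hs : (a::l').getLast?.isSome := List.getLast?_isSome.2 (by simp)
    rcases Option.isSome_iff_exists.1 hs with ⟨b, hb⟩
    simp [hb]

lemma getLast?_cons_ne {l : List α} (a : α) (h : l ≠ []) :
    (a :: l).getLast? = l.getLast? := by
  simpa using getLast?_append_ne (l := [a]) h

/-- decomposition of a list around position i-1,i,i+1 -/
lemma decomp_of_get? {L : List α} {i : ℕ} {x v z : α} (hi : 0 < i)
    (hx : L[(i-1)]? = some x) (hv : L[i]? = some v) (hz : L[(i+1)]? = some z) :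
    L = L.take (i-1) ++ x :: v :: z :: L.drop (i+2) := by
  obtain ⟨hx1, hx2⟩ := List.getElem?_eq_some_iff.1 hx
  obtain ⟨hv1, hv2⟩ := List.getElem?_eq_some_iff.1 hv
  obtain ⟨hz1, hz2⟩ := List.getElem?_eq_some_iff.1 hz
  have hx2' : L[i-1]'hx1 = x := by simpa [List.get] using hx2
  have hv2' : L[i]'hv1 = v := by simpa [List.get] using hv2
  have hz2' : L[i+1]'hz1 = z := by simpa [List.get] using hz2
  have h1 : L.drop (i-1) = x :: L.drop i := by
    rw [List.drop_eq_getElem_cons hx1, hx2', show i-1+1 = i by omega]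
  have h2 : L.drop i = v :: L.drop (i+1) := by
    rw [List.drop_eq_getElem_cons hv1, hv2']
  have h3 : L.drop (i+1) = z :: L.drop (i+2) := by
    rw [List.drop_eq_getElem_cons hz1, hz2']
  conv_lhs => rw [← List.take_append_drop (i-1) L]
  rw [h1, h2, h3]

lemma get?_decomp {l1 l2 : List α} {x v z : α} :
    ((l1 ++ x :: v :: z :: l2)[l1.length]? = some x) ∧
    ((l1 ++ x :: v :: z :: l2)[(l1.length + 1)]? = some v) ∧
    ((l1 ++ x :: v :: z :: l2)[(l1.length + 2)]? = some z) := by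
  refine ⟨?_, ?_, ?_⟩ <;>
    · rw [List.getElem?_append_right (by omega)]
      simp

end Stmt4Aux


section Bridge
open CausalDAG Stmt4Aux List Relation

variable {V : Type*} {E : V → V → Prop} {a b : V} {S : Set V}

lemma colliderAt_iff (p : GPath E a b) {i : ℕ} {x v z : V}
    (hx : p.nodes[(i-1)]? = some x) (hv : p.nodes[i]? = some v)
    (hz : p.nodes[(i+1)]? = some z) :
    p.ColliderAt i ↔ (E x v ∧ E z v) := by
  constructor
  · rintro ⟨x', v', z', hx', hv', hz', e1, e2⟩
    rw [hx] at hx'; rw [hv] at hv'; rw [hz] at hz'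
    cases hx'; cases hv'; cases hz'
    exact ⟨e1, e2⟩
  · rintro ⟨e1, e2⟩
    exact ⟨x, v, z, hx, hv, hz, e1, e2⟩

lemma blockedBy_iff_lblk (p : GPath E a b) :
    p.BlockedBy S ↔ LBlk E S p.nodes := by
  constructor
  · rintro ⟨i, v, ⟨hi0, hi1⟩, hv, hcase⟩
    have hlen := p.nodes.length
    have hx : p.nodes[(i-1)]? = some (p.nodes.get ⟨i-1, by omega⟩) :=
      List.getElem?_eq_getElem _
    have hz : p.nodes[(i+1)]? = some (p.nodes.get ⟨i+1, by omega⟩) :=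
      List.getElem?_eq_getElem _
    set x := p.nodes.get ⟨i-1, by omega⟩
    set z := p.nodes.get ⟨i+1, by omega⟩
    have hdec := decomp_of_get? hi0 hx hv hz
    refine ⟨p.nodes.take (i-1), x, v, z, p.nodes.drop (i+2), hdec, ?_⟩
    have hcol := colliderAt_iff p hx hv hz
    rcases hcase with ⟨hnc, hvS⟩ | ⟨hc, hvS, hd⟩
    · exact Or.inl ⟨fun h => hnc (hcol.2 h), hvS⟩
    · exact Or.inr ⟨hcol.1 hc, hvS, hd⟩
  · rintro ⟨l1, x, v, z, l2, hdec, htri⟩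
    obtain ⟨hx, hv, hz⟩ : p.nodes[l1.length]? = some x ∧
        p.nodes[(l1.length + 1)]? = some v ∧ p.nodes[(l1.length + 2)]? = some z := by
      rw [hdec]; exact get?_decomp
    have hx' : p.nodes[(l1.length + 1 - 1)]? = some x := by simpa using hx
    have hz' : p.nodes[(l1.length + 1 + 1)]? = some z := by
      simpa [show l1.length + 1 + 1 = l1.length + 2 by omega] using hz
    have hcol := colliderAt_iff p hx' hv hz'
    refine ⟨l1.length + 1, v, ⟨by omega, ?_⟩, hv, ?_⟩
    · rw [hdec]; simp; omega
    · rcases htri with ⟨hnc, hvS⟩ | ⟨hc, hvS, hd⟩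
      · exact Or.inl ⟨fun h => hnc (hcol.1 h), hvS⟩
      · exact Or.inr ⟨hcol.2 hc, hvS, hd⟩

lemma intoFirst_iff (p : GPath E a b) :
    p.IntoFirst ↔ ∃ w l, p.nodes = a :: w :: l ∧ E w a := by
  obtain ⟨L, hL⟩ : ∃ L, p.nodes = a :: L := by
    rcases h : p.nodes with _ | ⟨c, L⟩
    · have := p.head_eq; rw [h] at this; simp at this
    · have := p.head_eq; rw [h] at this; simp at this; exact ⟨L, by rw [this]⟩
  constructor
  · rintro ⟨w, hw, hE⟩
    rw [hL] at hw
    rcases hL2 : L with _ | ⟨w', L'⟩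
    · rw [hL2] at hw; simp at hw
    · rw [hL2] at hw; simp at hw; subst hw
      exact ⟨w', L', by rw [hL, hL2], hE⟩
  · rintro ⟨w, l, hdec, hE⟩
    exact ⟨w, by rw [hdec]; rfl, hE⟩

end Bridge

namespace Stmt4Aux
open List Relation

variable {α : Type*} {R : α → α → Prop}

open scoped Classical

lemma chain'_transGen : ∀ (m : List α) {a b : α},
    List.Chain' R (a :: m ++ [b]) → Relation.TransGen R a b := by
  intro m
  induction m with
  | nil => intro a b h; exact Relation.TransGen.single (List.isChain_cons_cons.1 h).1
  | cons w m' IH =>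
      intro a b h
      rw [List.cons_append] at h
      exact Relation.TransGen.head (List.isChain_cons_cons.1 h).1 (IH (List.isChain_cons_cons.1 h).2)

lemma nodupChain (hacy : ∀ v, ¬ Relation.TransGen R v v) {a b : α}
    (h : Relation.TransGen R a b) :
    ∃ m, List.Chain' R (a :: m ++ [b]) ∧ (a :: m ++ [b]).Nodup := by
  induction h with
  | single hab =>
      refine ⟨[], by simp [List.Chain', List.isChain_cons_cons, hab], by
        simp; intro he; subst he; exact hacy _ (Relation.TransGen.single hab)⟩
  | @tail c b h1 h2 IH =>
      obtain ⟨m, hch, hnd⟩ := IH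
      by_cases hb : b ∈ (a :: m ++ [c])
      · obtain ⟨P, Q, hPQ⟩ := List.append_of_mem hb
        have hane : a ≠ b := by
          intro he; subst he; exact hacy _ (h1.tail h2)
        rcases P with _ | ⟨p, P'⟩
        · exfalso
          apply hane
          have hhd := congrArg List.head? hPQ
          simpa using hhd
        · have hpa : a = p := by
            have hhd := congrArg List.head? hPQ; simpa using hhd
          subst hpa
          refine ⟨P', ?_, ?_⟩
          · have hpre : (a :: P' ++ [b]) <+: (a :: m ++ [c]) := by
              rw [hPQ]; exact ⟨Q, by simp⟩
            exact hch.prefix hpre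
          · have hsub : (a :: P' ++ [b]) <+ (a :: m ++ [c]) := by
              rw [hPQ]
              have : (a :: P' ++ [b]) ++ Q = a :: P' ++ b :: Q := by simp
              exact this ▸ List.sublist_append_left _ Q
            exact hnd.sublist hsub
      · refine ⟨m ++ [c], ?_, ?_⟩
        · have heq : a :: (m ++ [c]) ++ [b] = (a :: m ++ [c]) ++ [b] := by simp
          rw [heq]; unfold List.Chain'; rw [List.isChain_append]
          refine ⟨hch, List.isChain_singleton b, ?_⟩
          intro x hx y hy
          simp at hy; subst hy
          have hl : (a :: m ++ [c]).getLast? = some c := by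
            rw [show a :: m ++ [c] = (a :: m) ++ [c] by simp, getLast?_append_ne (by simp)]
            simp
          rw [hl] at hx; simp at hx; subst hx; exact h2
        · have heq : a :: (m ++ [c]) ++ [b] = (a :: m ++ [c]) ++ [b] := by simp
          rw [heq]
          exact List.Nodup.append hnd (by simp)
            (by intro x hx; simp; intro he; subst he; exact hb hx)

lemma split3 {X Y l1 l2 : List α} {x v z : α} (h : X ++ Y = l1 ++ x::v::z::l2) :
    (∃ m, X = l1 ++ x::v::z::m) ∨
    (∃ m, Y = m ++ x::v::z::l2) ∨
    (X = l1 ++ [x] ∧ Y = v::z::l2) ∨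
    (X = l1 ++ [x,v] ∧ Y = z::l2) := by
  induction l1 generalizing X with
  | nil =>
      rcases X with _ | ⟨a, X2⟩
      · right; left; exact ⟨[], by simpa using h⟩
      · simp at h
        obtain ⟨hax, h2⟩ := h
        subst hax
        rcases X2 with _ | ⟨b, X3⟩
        · right; right; left; simp at h2 ⊢; exact h2
        · simp at h2
          obtain ⟨hbv, h3⟩ := h2
          subst hbv
          rcases X3 with _ | ⟨c, X4⟩
          · right; right; right; simp at h3 ⊢; exact h3
          · simp at h3
            obtain ⟨hcz, _⟩ := h3
            subst hcz
            left; exact ⟨X4, by simp⟩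
  | cons p l1' IH =>
      rcases X with _ | ⟨a, X2⟩
      · right; left
        exact ⟨p :: l1', by simpa using h⟩
      · simp at h
        obtain ⟨hap, h2⟩ := h
        subst hap
        rcases IH h2 with ⟨m, hm⟩ | hm | ⟨ha, hb⟩ | ⟨ha, hb⟩
        · left; exact ⟨m, by simp [hm]⟩
        · right; left; exact hm
        · right; right; left; exact ⟨by simp [ha], hb⟩
        · right; right; right; exact ⟨by simp [ha], hb⟩

lemma last_mem_split {P : α → Prop} {W : List α} (h : ∃ u ∈ W, P u) :
    ∃ W1 w W2, W = W1 ++ w :: W2 ∧ P w ∧ ∀ u ∈ W2, ¬ P u := by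
  induction W with
  | nil => simp at h
  | cons a W2 IH =>
      by_cases h2 : ∃ u ∈ W2, P u
      · obtain ⟨W1, w, W3, hdec, hw, hW3⟩ := IH h2
        exact ⟨a :: W1, w, W3, by simp [hdec], hw, hW3⟩
      · have hPa : P a := by
          obtain ⟨u, hu, hPu⟩ := h
          simp at hu
          rcases hu with rfl | hu
          · exact hPu
          · exact absurd ⟨u, hu, hPu⟩ h2
        exact ⟨[], a, W2, by simp, hPa, fun u hu hPu => h2 ⟨u, hu, hPu⟩⟩

lemma exists_map_some {l : List (Option α)} (h : ∀ o ∈ l, o ≠ none) :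
    ∃ L : List α, l = L.map some := by
  induction l with
  | nil => exact ⟨[], rfl⟩
  | cons o l2 IH =>
      obtain ⟨L, hL⟩ := IH (fun o2 ho2 => h o2 (by simp [ho2]))
      rcases o with _ | a
      · exact absurd rfl (h none (by simp))
      · exact ⟨a :: L, by simp [hL]⟩

lemma map_some_decomp {l : List α} {l1 l2 : List (Option α)} {x v z : Option α}
    (h : l.map some = l1 ++ x :: v :: z :: l2) :
    ∃ m1 a b c m2, l = m1 ++ a :: b :: c :: m2 ∧ l1 = m1.map some ∧
      x = some a ∧ v = some b ∧ z = some c ∧ l2 = m2.map some := by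
  induction l1 generalizing l with
  | nil =>
      rcases l with _ | ⟨a, l2'⟩
      · simp at h
      · simp at h
        obtain ⟨hxa, h2⟩ := h
        rcases l2' with _ | ⟨b, l3⟩
        · simp at h2
        · simp at h2
          obtain ⟨hvb, h3⟩ := h2
          rcases l3 with _ | ⟨c, l4⟩
          · simp at h3
          · simp at h3
            obtain ⟨hzc, h4⟩ := h3
            exact ⟨[], a, b, c, l4, by simp, rfl, hxa.symm, hvb.symm, hzc.symm, h4.symm⟩
  | cons o l1' IH =>
      rcases l with _ | ⟨a, l2'⟩
      · simp at h
      · simp at h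
        obtain ⟨hoa, h2⟩ := h
        obtain ⟨m1, a2, b2, c2, m2, hdec, hl1, hx, hv, hz, hl2⟩ := IH h2
        exact ⟨a :: m1, a2, b2, c2, m2, by simp [hdec], by simp [hl1, hoa.symm], hx, hv, hz, hl2⟩

open scoped Classical in
/-- number of collider triples in a list -/
noncomputable def ncol (R : α → α → Prop) : List α → ℕ
  | x :: v :: z :: l => (if R x v ∧ R z v then 1 else 0) + ncol R (v :: z :: l)
  | _ => 0

lemma ncol_cons₃ (x v z : α) (l : List α) :
    ncol R (x :: v :: z :: l) =
      (if R x v ∧ R z v then 1 else 0) + ncol R (v :: z :: l) := by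
  rw [ncol]

lemma ncol_le_cons (a : α) (M : List α) : ncol R M ≤ ncol R (a :: M) := by
  rcases M with _ | ⟨b, _ | ⟨c, M2⟩⟩
  · simp [ncol]
  · simp [ncol]
  · rw [ncol_cons₃]; omega

lemma ncol_le_append (X M : List α) : ncol R M ≤ ncol R (X ++ M) := by
  induction X with
  | nil => simp
  | cons a X2 IH => exact le_trans IH (by simpa using ncol_le_cons a (X2 ++ M))

lemma ncol_cons_of_not_head {a : α} {M : List α}
    (h : ∀ c, M.head? = some c → ¬ R a c) : ncol R (a :: M) = ncol R M := by
  rcases M with _ | ⟨b, _ | ⟨c, M2⟩⟩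
  · simp [ncol]
  · simp [ncol]
  · rw [ncol_cons₃]
    have hnb : ¬ (R a b ∧ R c b) := fun hh => h b rfl hh.1
    simp [hnb, ncol_cons₃]

lemma ncol_graft (hacy : ∀ v, ¬ Relation.TransGen R v v) :
    ∀ (X : List α) (w : α) (C : List α), List.Chain' (flip R) (X ++ [w]) →
    ncol R (X ++ w :: C) = ncol R (w :: C) := by
  intro X
  induction X with
  | nil => intro w C _; rfl
  | cons a X2 IH =>
      intro w C hch
      rw [List.cons_append] at hch
      have hch2 := (List.isChain_cons.1 hch).2
      have hhd := (List.isChain_cons.1 hch).1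
      have hstep : ncol R (a :: (X2 ++ w :: C)) = ncol R (X2 ++ w :: C) := by
        apply ncol_cons_of_not_head
        intro c hc hRac
        have hc2 : (X2 ++ [w]).head? = some c := by
          rcases X2 with _ | ⟨b, X3⟩
          · simpa using hc
          · simpa using hc
        have hca := hhd c hc2
        exact hacy a (Relation.TransGen.head hRac (Relation.TransGen.single hca))
      rw [List.cons_append, hstep, IH w C hch2]

end Stmt4Aux

section KeyLemma
open CausalDAG Stmt4Aux List Relation

variable {V : Type*} {E : V → V → Prop} {t y : V} {Z : Set V}

lemma cycle2 (hacy : Acyclic E) {a b : V} (h1 : E a b) (h2 : E b a) : False :=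
  hacy a (Relation.TransGen.head h1 (Relation.TransGen.single h2))

lemma edge_ne (hacy : Acyclic E) {a b : V} (h : E a b) : a ≠ b := by
  intro he; subst he; exact hacy a (Relation.TransGen.single h)

lemma descY (hYcl : ∀ w, ¬ E y w) {d : V} (h : Relation.TransGen E y d) : False := by
  induction h with
  | single h1 => exact hYcl _ h1
  | tail _ _ IH => exact IH

lemma descT (hOnly : ∀ w, E t w → w = y) (hYcl : ∀ w, ¬ E y w) {d : V}
    (h : Relation.TransGen E t d) : d = y := by
  induction h with
  | single h1 => exact hOnly _ h1
  | tail h1 h2 IH => subst IH; exact absurd h2 (hYcl _)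

lemma chain'_last {R : V → V → Prop} {m : List V} {b : V}
    (h : List.Chain' R (m ++ [b])) (hm : m ≠ []) : R (m.getLast hm) b := by
  obtain ⟨-, -, hj⟩ := List.isChain_append.1 h
  exact hj _ (by rw [List.getLast?_eq_getLast hm]; rfl) b rfl

lemma transGen_sub_proj {xt : V} {V0 : Set V} :
    ∀ {o o' : Option V}, Relation.TransGen (subEdge E xt V0) o o' →
    ∀ {u d : V}, o = some u → o' = some d → Relation.TransGen E u d := by
  intro o o' h
  induction h with
  | single h1 =>
      rintro u d rfl rfl
      exact Relation.TransGen.single h1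
  | @tail o1 o2 h1 h2 IH =>
      rintro u d rfl rfl
      rcases o1 with _ | c
      · exact absurd h2 (by simp [subEdge])
      · exact Relation.TransGen.tail (IH rfl rfl) h2

lemma transGen_sub_lift {xt : V} {V0 : Set V} {u d : V} (h : Relation.TransGen E u d) :
    Relation.TransGen (subEdge E xt V0) (some u) (some d) :=
  Relation.TransGen.lift some (fun _ _ h => h) _ _ h

lemma tri_option_down {xt : V} {V0 : Set V} {S : Set V} {a b c : V}
    (h : Tri (subEdge E xt V0) (some '' S) (some a) (some b) (some c)) :
    Tri E S a b c := by
  have hmem : ∀ u : V, (some u ∈ some '' S) ↔ u ∈ S := by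
    intro u; constructor
    · rintro ⟨u', hu', he⟩; cases he; exact hu'
    · intro hu; exact ⟨u, hu, rfl⟩
  rcases h with ⟨hnc, hbS⟩ | ⟨hc, hbS, hd⟩
  · exact Or.inl ⟨hnc, (hmem b).1 hbS⟩
  · refine Or.inr ⟨hc, fun hb => hbS ((hmem b).2 hb), fun d hd' hdS => ?_⟩
    exact hd (some d) (transGen_sub_lift hd') ((hmem d).2 hdS)

lemma tri_option_up {xt : V} {V0 : Set V} {S : Set V} {a b c : V}
    (h : Tri E S a b c) :
    Tri (subEdge E xt V0) (some '' S) (some a) (some b) (some c) := by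
  have hmem : ∀ u : V, (some u ∈ some '' S) ↔ u ∈ S := by
    intro u; constructor
    · rintro ⟨u', hu', he⟩; cases he; exact hu'
    · intro hu; exact ⟨u, hu, rfl⟩
  rcases h with ⟨hnc, hbS⟩ | ⟨hc, hbS, hd⟩
  · exact Or.inl ⟨hnc, (hmem b).2 hbS⟩
  · refine Or.inr ⟨hc, fun hb => hbS ((hmem b).1 hb), fun d hd' hdS => ?_⟩
    obtain ⟨d', hd'S, rfl⟩ := hdS
    exact hd d' (transGen_sub_proj hd' rfl rfl) hd'S

lemma tri_S_to_Z {a b c : V} (hbt : b ≠ t) (h : Tri E (Z ∪ {t}) a b c) :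
    Tri E Z a b c := by
  rcases h with ⟨hnc, hbS⟩ | ⟨hc, hbS, hd⟩
  · rcases hbS with hbZ | hbt'
    · exact Or.inl ⟨hnc, hbZ⟩
    · exact absurd hbt' hbt
  · exact Or.inr ⟨hc, fun hb => hbS (Or.inl hb), fun d hd' hdZ => hd d hd' (Or.inl hdZ)⟩

lemma tri_ZS {x v z : V} (h1 : Tri E Z x v z) (h2 : ¬ Tri E (Z ∪ {t}) x v z)
    (hvt : v ≠ t) :
    (E x v ∧ E z v) ∧ v ∉ Z ∧ (∀ d, Relation.TransGen E v d → d ∉ Z) ∧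
      Relation.TransGen E v t := by
  rcases h1 with ⟨hnc, hvZ⟩ | ⟨hc, hvZ, hdZ⟩
  · exact absurd (Or.inl ⟨hnc, Or.inl hvZ⟩) h2
  · refine ⟨hc, hvZ, hdZ, ?_⟩
    by_contra hvt'
    apply h2
    refine Or.inr ⟨hc, ?_, ?_⟩
    · rintro (h | h)
      · exact hvZ h
      · exact hvt h
    · intro d hd
      rintro (h | h)
      · exact hdZ d hd h
      · simp at h; subst h; exact hvt' hd

/-- the key combinatorial lemma -/
lemma key (hacy : Acyclic E) (hty : E t y) (hOnly : ∀ w, E t w → w = y)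
    (hYcl : ∀ w, ¬ E y w) (htZ : t ∉ Z) (hyZ : y ∉ Z) (hty' : t ≠ y)
    (hback : BackDoor E t y Z) :
    ∀ n (L : List V) (c : V), List.Chain' (Adj E) L → L.Nodup → L.head? = some c →
      L.getLast? = some y → 2 ≤ L.length → E c t → c ∉ Z → ncol E L ≤ n →
      LBlk E (Z ∪ {t}) L := by
  intro n
  induction n using Nat.strong_induction_on with
  | _ n IH =>
  intro L c hch hnd hhd hlast hlen hEct hcZ hncol
  by_contra hr
  set S : Set V := Z ∪ {t} with hS
  have htS : t ∈ S := Or.inr rfl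
  have hyS : y ∉ S := by
    rintro (h | h)
    · exact hyZ h
    · exact hty' (by simpa using h.symm)
  -- Step alpha: find a problematic collider
  have halpha : ∃ Bp x v z l2, L = Bp ++ x::v::z::l2 ∧ (E x v ∧ E z v) ∧ v ∉ Z ∧
      (∀ d, Relation.TransGen E v d → d ∉ Z) ∧ Relation.TransGen E v t := by
    by_cases htL : t ∈ L
    · -- t occurs on the path
      obtain ⟨P, Q, hPQ⟩ := List.append_of_mem htL
      have hPne : P ≠ [] := by
        rintro rfl
        simp at hPQ
        rw [hPQ] at hhd
        simp at hhd
        exact edge_ne hacy hEct hhd.symm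
      have hQne : Q ≠ [] := by
        rintro rfl
        rw [hPQ] at hlast
        rw [getLast?_append_ne (by simp)] at hlast
        simp at hlast
        exact hty' hlast
      obtain ⟨P', x0, hP'⟩ := (List.eq_nil_or_concat P).resolve_left hPne
      rcases Q with _ | ⟨z0, Q'⟩
      · exact absurd rfl hQne
      have hLdec : L = P' ++ x0 :: t :: z0 :: Q' := by rw [hPQ, hP']; simp
      have hnt : ¬ Tri E S x0 t z0 := fun h => hr ⟨P', _, _, _, _, hLdec, h⟩
      have hcolt : E x0 t ∧ E z0 t := by
        by_contra hc
        exact hnt (Or.inl ⟨hc, htS⟩)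
      have hndQ : (t :: z0 :: Q').Nodup := (hPQ ▸ hnd).of_append_right
      have hlastQ : (t :: z0 :: Q').getLast? = some y := by
        rw [hPQ, getLast?_append_ne (by simp)] at hlast
        exact hlast
      have hchQ : List.Chain' (Adj E) (t :: z0 :: Q') := hch.suffix ⟨P, hPQ.symm⟩
      set sp : GPath E t y :=
        ⟨t :: z0 :: Q', hndQ, by simp, rfl, hlastQ, hchQ⟩ with hsp
      have hif : sp.IntoFirst := (intoFirst_iff sp).2 ⟨z0, Q', rfl, hcolt.2⟩
      have hblk := (blockedBy_iff_lblk sp).1 (hback.2 sp hif)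
      obtain ⟨l1, x, v, z, l2, hdec, htri⟩ := hblk
      rcases l1 with _ | ⟨t', l1'⟩
      · -- triple at head of suffix: x = t, v = z0
        simp [hsp] at hdec
        obtain ⟨hxt, hvz0, hQdec⟩ := hdec
        subst hxt; subst hvz0
        rcases htri with ⟨hnc, hvZ⟩ | ⟨⟨hEtz0, hEzz0⟩, hvZ, hdZ⟩
        · -- noncollider with z0 ∈ Z: blocks L w.r.t. S too
          exact absurd ⟨P' ++ [x0], t, z0, z, l2,
            by rw [hLdec, hQdec]; simp, Or.inl ⟨hnc, Or.inl hvZ⟩⟩ hr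
        · -- E t z0 forces z0 = y
          have hz0y : z0 = y := hOnly _ hEtz0
          refine absurd ⟨P' ++ [x0], t, z0, z, l2,
            by rw [hLdec, hQdec]; simp,
            Or.inr ⟨⟨hEtz0, hEzz0⟩, by rw [hz0y]; exact hyS, ?_⟩⟩ hr
          intro d hd
          rw [hz0y] at hd
          exact absurd hd (fun h => descY hYcl h)
      · -- triple inside Q
        have hQdec : z0 :: Q' = l1' ++ x :: v :: z :: l2 := by
          have := congrArg List.tail hdec; simpa [hsp] using this
        have hvQ : v ∈ z0 :: Q' := by rw [hQdec]; simp
        have hvt : v ≠ t := by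
          rintro rfl
          exact (List.nodup_cons.1 hndQ).1 hvQ
        have hLdec2 : L = (P' ++ [x0] ++ [t] ++ l1') ++ x :: v :: z :: l2 := by
          rw [hLdec, hQdec]; simp
        have hnS : ¬ Tri E S x v z := fun h => hr ⟨_, _, _, _, _, hLdec2, h⟩
        obtain ⟨hcol, hvZ, hdZ, hvdt⟩ := tri_ZS htri hnS hvt
        exact ⟨_, _, _, _, _, hLdec2, hcol, hvZ, hdZ, hvdt⟩
    · -- t does not occur: prepend t
      obtain ⟨L0, hL0⟩ : ∃ L0, L = c :: L0 := by
        rcases hL : L with _ | ⟨c0, L0⟩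
        · rw [hL] at hhd; simp at hhd
        · have hh := hhd
          rw [hL] at hh; simp at hh
          exact ⟨L0, by rw [hh]⟩
      have hndP : (t :: L).Nodup := List.nodup_cons.2 ⟨htL, hnd⟩
      have hlastP : (t :: L).getLast? = some y := by
        rw [getLast?_cons_ne t (by rw [hL0]; simp)]
        exact hlast
      have hchP : List.Chain' (Adj E) (t :: L) := by
        rw [hL0]
        exact List.isChain_cons_cons.2 ⟨Or.inr hEct, hL0 ▸ hch⟩
      set p : GPath E t y := ⟨t :: L, hndP, by simp only [List.length_cons]; omega, rfl, hlastP, hchP⟩ with hp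
      have hif : p.IntoFirst := (intoFirst_iff p).2
        ⟨c, L0, by show t :: L = t :: c :: L0; rw [hL0], hEct⟩
      have hblk := (blockedBy_iff_lblk p).1 (hback.2 p hif)
      obtain ⟨l1, x, v, z, l2, hdec, htri⟩ := hblk
      rcases l1 with _ | ⟨t', l1'⟩
      · -- x = t, v = c
        simp [hp] at hdec
        obtain ⟨hxt, hLdec⟩ := hdec
        have hvc : v = c := by
          rw [hLdec] at hhd; simpa using hhd
        subst hvc; subst hxt
        rcases htri with ⟨hnc, hvZ⟩ | ⟨⟨hEtv, hEzv⟩, hvZ, hdZ⟩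
        · exact absurd hvZ hcZ
        · have : v = y := hOnly _ hEtv
          subst this
          exact absurd hEct (hYcl t)
      · have hLdec : L = l1' ++ x :: v :: z :: l2 := by
          have := congrArg List.tail hdec; simpa [hp] using this
        have hvt : v ≠ t := by
          rintro rfl
          exact htL (by rw [hLdec]; simp)
        have hnS : ¬ Tri E S x v z := fun h => hr ⟨_, _, _, _, _, hLdec, h⟩
        obtain ⟨hcol, hvZ, hdZ, hvdt⟩ := tri_ZS htri hnS hvt
        exact ⟨_, _, _, _, _, hLdec, hcol, hvZ, hdZ, hvdt⟩
  -- Step beta: surgery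
  obtain ⟨Bp, x, v, z, l2, hLdec, ⟨hExv, hEzv⟩, hvZ, hdZ, hvdt⟩ := halpha
  obtain ⟨ds, hchD, hndD⟩ := nodupChain hacy hvdt
  set A : List V := v :: ds with hA
  have hchA' : List.Chain' E (A ++ [t]) := by simpa using hchD
  have hndA' : (A ++ [t]).Nodup := by simpa using hndD
  have hndA : A.Nodup := hndA'.of_append_left
  have htA : t ∉ A := by
    intro h
    have := (List.nodup_append.1 hndA').2.2
    exact this _ h _ (by simp) rfl
  have hdesc : ∀ u ∈ ds, Relation.TransGen E v u := by
    intro u hu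
    obtain ⟨P, Q, hPQ⟩ := List.append_of_mem hu
    apply chain'_transGen P
    apply hchA'.prefix
    refine ⟨Q ++ [t], ?_⟩
    rw [hA, hPQ]; simp
  have hAZ : ∀ u ∈ A, u ∉ Z := by
    intro u hu
    rcases (List.mem_cons.1 hu) with rfl | hu'
    · exact hvZ
    · exact hdZ u (hdesc u hu')
  have hAdt : ∀ u ∈ A, Relation.TransGen E u t := by
    intro u hu
    obtain ⟨P, Q, hPQ⟩ := List.append_of_mem hu
    apply chain'_transGen Q
    apply hchA'.suffix
    refine ⟨P, ?_⟩
    rw [hPQ]; simp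
  have hAy : ∀ u ∈ A, u ≠ y :=
    fun u hu he => absurd (he ▸ hAdt u hu) (fun h => descY hYcl h)
  have hAt : ∀ u ∈ A, u ≠ t := fun u hu he => htA (he ▸ hu)
  have hAS : ∀ u ∈ A, u ∉ S := by
    intro u hu
    rintro (h | h)
    · exact hAZ u hu h
    · exact hAt u hu (by simpa using h)
  set W : List V := v :: z :: l2 with hW
  have hLW : L = (Bp ++ [x]) ++ W := by rw [hLdec]; simp
  have hWch : List.Chain' (Adj E) W := hch.suffix ⟨Bp ++ [x], hLW.symm⟩
  have hWnd : W.Nodup := (hLW ▸ hnd).of_append_right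
  have hWlast : W.getLast? = some y := by
    rw [hLW, getLast?_append_ne (by simp)] at hlast
    exact hlast
  obtain ⟨W1, w, W2, hWdec, hwA, hW2A⟩ :=
    last_mem_split (P := fun u => u ∈ A) (W := W) ⟨v, by rw [hW]; simp, by rw [hA]; simp⟩
  obtain ⟨A1, A2, hAdec⟩ := List.append_of_mem hwA
  have hW2ne : W2 ≠ [] := by
    rintro rfl
    rw [hWdec, getLast?_append_ne (by simp)] at hWlast
    simp at hWlast
    exact hAy w hwA hWlast
  have hndwA2 : (w :: A2).Nodup := (hAdec ▸ hndA).of_append_right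
  have hchwA2 : List.Chain' E (w :: A2) :=
    (hchA'.prefix (List.prefix_append _ _)).suffix ⟨A1, hAdec.symm⟩
  set c' := (w :: A2).getLast (by simp) with hc'
  have hc'mem : c' ∈ w :: A2 := List.getLast_mem _
  have hc'A : c' ∈ A := by rw [hAdec]; exact List.mem_append_right _ hc'mem
  have hEc't : E c' t := by
    apply chain'_last (m := w :: A2) _ (by simp)
    apply hchA'.suffix
    refine ⟨A1, ?_⟩
    rw [hAdec]; simp
  have hc'Z : c' ∉ Z := hAZ _ hc'A
  set L' : List V := A2.reverse ++ w :: W2 with hL'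
  -- chain
  have hchA2 : List.Chain' E A2 := (List.isChain_cons.1 hchwA2).2
  have hchA2r : List.Chain' (Adj E) A2.reverse := by
    apply List.isChain_reverse.2
    exact hchA2.imp (fun a b h => Or.inr h)
  have hchwW2 : List.Chain' (Adj E) (w :: W2) := hWch.suffix ⟨W1, hWdec.symm⟩
  have hch' : List.Chain' (Adj E) L' := by
    rw [hL']; unfold List.Chain'; rw [List.isChain_append]
    refine ⟨hchA2r, hchwW2, ?_⟩
    intro p hp q hq
    simp at hq
    subst hq
    rw [List.getLast?_reverse] at hp
    rcases hA2e : A2 with _ | ⟨a2, A2'⟩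
    · rw [hA2e] at hp; simp at hp
    · rw [hA2e] at hp
      simp at hp
      subst hp
      refine Or.inr ((List.isChain_cons.1 hchwA2).1 a2 ?_)
      rw [hA2e]; rfl
  -- nodup
  have hndwW2 : (w :: W2).Nodup := (hWdec ▸ hWnd).of_append_right
  have hnd' : L'.Nodup := by
    rw [hL']
    refine List.Nodup.append (List.nodup_reverse.2 hndwA2.of_cons) hndwW2 ?_
    intro u hu
    rw [List.mem_reverse] at hu
    intro hu2
    rcases List.mem_cons.1 hu2 with rfl | hu3
    · exact (List.nodup_cons.1 hndwA2).1 hu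
    · exact hW2A u hu3 (by rw [hAdec]; exact List.mem_append_right _ (List.mem_cons_of_mem _ hu))
  -- head
  have hhd' : L'.head? = some c' := by
    have h1 : L' = (w :: A2).reverse.reverse.reverse ++ W2 := by
      rw [hL']; simp
    rw [hL', show A2.reverse ++ w :: W2 = (A2.reverse ++ [w]) ++ W2 by simp,
      List.head?_append, show A2.reverse ++ [w] = (w :: A2).reverse by simp,
      List.head?_reverse, List.getLast?_eq_getLast (l := (w :: A2)) (by simp)]
    rfl
  -- last
  have hlast' : L'.getLast? = some y := by
    rw [hWdec, getLast?_append_ne (by simp), getLast?_cons_ne _ hW2ne] at hWlast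
    rw [hL', getLast?_append_ne (by simp), getLast?_cons_ne _ hW2ne]
    exact hWlast
  -- length
  have hlen' : 2 ≤ L'.length := by
    rw [hL']
    rcases W2 with _ | ⟨w2, W2'⟩
    · exact absurd rfl hW2ne
    · simp; omega
  -- ncol decrease
  have hgraft : ncol E L' = ncol E (w :: W2) := by
    apply ncol_graft hacy
    rw [show A2.reverse ++ [w] = (w :: A2).reverse by simp]
    apply List.isChain_reverse.2
    exact hchwA2.imp (fun a b h => h)
  have hle1 : ncol E (w :: W2) ≤ ncol E W := by
    rw [hWdec]
    exact ncol_le_append _ _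
  have heq2 : ncol E (x :: W) = 1 + ncol E W := by
    rw [hW, ncol_cons₃]
    simp [hExv, hEzv]
  have hle3 : ncol E (x :: W) ≤ ncol E L := by
    rw [hLW, show (Bp ++ [x]) ++ W = Bp ++ (x :: W) by simp]
    exact ncol_le_append _ _
  have hlt : ncol E L' < n := by omega
  have hblk' := IH (ncol E L') hlt L' c' hch' hnd' hhd' hlast' hlen' hEc't hc'Z (le_refl _)
  -- derive contradiction
  obtain ⟨l1, x1, v1, z1, l2', hdec', htri'⟩ := hblk'
  have hrev : List.Chain' (flip E) (A2.reverse ++ [w]) := by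
    rw [show A2.reverse ++ [w] = (w :: A2).reverse by simp]
    apply List.isChain_reverse.2
    exact hchwA2.imp (fun a b h => h)
  rcases split3 (hL' ▸ hdec') with ⟨m, hm⟩ | ⟨m, hm⟩ | ⟨h1, h2⟩ | ⟨h1, h2⟩
  · -- triple inside A2.reverse
    have hv1A2 : v1 ∈ A2 := by
      rw [← List.mem_reverse, hm]; simp
    have hv1A : v1 ∈ A := by
      rw [hAdec]; exact List.mem_append_right _ (List.mem_cons_of_mem _ hv1A2)
    have hrels : flip E x1 v1 ∧ flip E v1 z1 := by
      have hinf : [x1, v1, z1] <:+: (A2.reverse ++ [w]) := by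
        refine ⟨l1, m ++ [w], ?_⟩
        rw [hm]; simp
      have hc3 := hrev.infix hinf
      exact ⟨(List.isChain_cons_cons.1 hc3).1, (List.isChain_cons_cons.1 (List.isChain_cons_cons.1 hc3).2).1⟩
    rcases htri' with ⟨_, hv1S⟩ | ⟨⟨hx1v1, _⟩, _, _⟩
    · exact hAS v1 hv1A hv1S
    · exact cycle2 hacy hx1v1 hrels.1
  · -- triple inside w :: W2 : contradicts hr
    apply hr
    refine ⟨(Bp ++ [x]) ++ W1 ++ m, x1, v1, z1, l2', ?_, htri'⟩
    rw [hLW, hWdec, hm]; simp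
  · -- straddle 1 : v1 = w
    have hv1w : v1 = w := by
      have h0 := congrArg List.head? h2; simp at h0; exact h0.symm
    rcases htri' with ⟨_, hv1S⟩ | ⟨⟨hx1v1, _⟩, _, _⟩
    · exact hAS w hwA (hv1w ▸ hv1S)
    · -- x1 = head of A2; E w x1
      have hA2 : A2 = x1 :: l1.reverse := by
        have h0 := congrArg List.reverse h1; simpa using h0
      have hEwx1 : E w x1 := (List.isChain_cons.1 hchwA2).1 x1 (by rw [hA2]; rfl)
      exact cycle2 hacy (hv1w ▸ hx1v1) hEwx1
  · -- straddle 2 : z1 = w, v1 penultimate of A2.reverse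
    have hA2 : A2 = v1 :: x1 :: l1.reverse := by
      have := congrArg List.reverse h1; simpa using this
    have hv1A : v1 ∈ A := by
      rw [hAdec, hA2]; simp
    rcases htri' with ⟨_, hv1S⟩ | ⟨⟨hx1v1, _⟩, _, _⟩
    · exact hAS _ hv1A hv1S
    · have hEv1x1 : E v1 x1 := by
        have := hchA2
        rw [hA2] at this
        exact (List.isChain_cons_cons.1 this).1
      exact cycle2 hacy hx1v1 hEv1x1
end KeyLemma


section MainAux
open CausalDAG Stmt4Aux List Relation

variable {V : Type*} {E : V → V → Prop}

lemma head_unique {L : List V} {t b : V} (hnd : L.Nodup) (hhd : L.head? = some t)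
    {m1 m2 : List V} {a c : V} (hdec : L = m1 ++ a::b::c::m2) : b ≠ t := by
  intro he
  subst he
  rcases m1 with _ | ⟨m1h, m1t⟩
  · rw [hdec] at hhd hnd
    simp at hhd
    rw [hhd] at hnd
    exact (List.nodup_cons.1 hnd).1 (by simp)
  · rw [hdec] at hhd hnd
    simp at hhd
    rw [hhd] at hnd
    simp only [List.cons_append] at hnd
    exact (List.nodup_cons.1 hnd).1 (by simp)

lemma mem_image_some {S : Set V} {u : V} : some u ∈ (some '' S) ↔ u ∈ S := by
  constructor
  · rintro ⟨u', hu', he⟩; cases he; exact hu'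
  · intro hu; exact ⟨u, hu, rfl⟩

end MainAux

open CausalDAG in
/-- Corollary 2: when every parent of `t` is observed, `Z ⊆ X^(o)`
satisfies the back-door criterion iff either `pa(t) ⊆ Z`, or there is a parent
`x_t ∉ Z` of `t` for which the invariance d-separation holds in the sub-sampled
graph. -/
theorem stmt4 {V : Type*} [Finite V] (M : SemiMarkov V)
    (hA1 : Assumption1 M)
    (hpa : ∀ w, M.E w M.t → w ∈ M.Xo)
    (Z : Set V) (hZ : Z ⊆ M.Xo) :
    BackDoor M.E M.t M.y Z ↔
      ({w | M.E w M.t} ⊆ Z ∨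
        ∃ xt, M.E xt M.t ∧ xt ∉ Z ∧ ∃ V0 ⊆ ({M.t} : Set V),
          DSep (subEdge M.E xt V0) (none : Option V) (some M.y)
            (some '' (Z ∪ {M.t}))) := by
  obtain ⟨hty, hOnly, hYcl⟩ := hA1
  have hacy := M.acyclic
  have htZ : M.t ∉ Z := fun h => M.t_notin (Or.inl (hZ h))
  have hyZ : M.y ∉ Z := fun h => M.y_notin (Or.inl (hZ h))
  constructor
  · -- forward
    intro hbd
    by_cases hsub : {w | M.E w M.t} ⊆ Z
    · exact Or.inl hsub
    right
    obtain ⟨xt, hxt, hxtZ⟩ := Set.not_subset.1 hsub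
    refine ⟨xt, hxt, hxtZ, ∅, by simp, ?_⟩
    intro q
    rw [blockedBy_iff_lblk]
    obtain ⟨rest, hrest⟩ : ∃ rest, q.nodes = none :: rest := by
      rcases hq : q.nodes with _ | ⟨o, rest⟩
      · have h0 := q.head_eq; rw [hq] at h0; simp at h0
      · have h0 := q.head_eq; rw [hq] at h0; simp at h0
        exact ⟨rest, by simp [hq, h0]⟩
    have hrne : rest ≠ [] := by
      rintro rfl
      have h0 := q.two_le; rw [hrest] at h0; simp at h0
    have hnone : ∀ o ∈ rest, o ≠ none := by
      intro o ho he
      subst he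
      have h0 := q.nodup; rw [hrest] at h0
      exact (List.nodup_cons.1 h0).1 ho
    obtain ⟨Lv, hLv⟩ := Stmt4Aux.exists_map_some hnone
    rcases Lv with _ | ⟨u, Lv'⟩
    · rw [hLv] at hrne; simp at hrne
    have hchq := q.chain
    rw [hrest, hLv] at hchq
    have hadj : Adj (subEdge M.E xt ∅) none (some u) := (List.isChain_cons_cons.1 hchq).1
    have hu : u = xt := by
      rcases hadj with h | h
      · exact absurd h (fun hh => hh)
      · rcases h with h | h
        · exact h
        · exact absurd h (Set.notMem_empty u)
    replace hu := hu.symm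
    subst hu
    have hchL : List.Chain' (Adj M.E) (xt :: Lv') := by
      have h1 : List.Chain' (Adj (subEdge M.E xt ∅)) ((xt :: Lv').map some) :=
        (List.isChain_cons_cons.1 hchq).2
      have h2 := (List.isChain_map some).1 h1
      exact h2.imp (fun a b hab => hab)
    have hndL : (xt :: Lv').Nodup := by
      have h0 := q.nodup; rw [hrest, hLv] at h0
      exact List.Nodup.of_map some (List.nodup_cons.1 h0).2
    have hlastL : (xt :: Lv').getLast? = some M.y := by
      have h0 := q.last_eq; rw [hrest, hLv] at h0
      rw [Stmt4Aux.getLast?_cons_ne none (by simp), List.getLast?_map] at h0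
      cases hgl : (xt :: Lv').getLast? with
      | none => rw [hgl] at h0; simp at h0
      | some b => rw [hgl] at h0; simp at h0; rw [h0]
    have hxty : xt ≠ M.y := fun he => M.y_notin (Or.inl (he ▸ hpa xt hxt))
    have hlenL : 2 ≤ (xt :: Lv').length := by
      rcases Lv' with _ | ⟨b, Lv''⟩
      · simp at hlastL; exact absurd hlastL hxty
      · simp
    have hblkL := key hacy hty hOnly hYcl htZ hyZ M.t_ne_y hbd (Stmt4Aux.ncol M.E (xt :: Lv'))
      (xt :: Lv') xt hchL hndL rfl hlastL hlenL hxt hxtZ (le_refl _)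
    obtain ⟨l1, x, v, z, l2, hdec, htri⟩ := hblkL
    refine ⟨none :: l1.map some, some x, some v, some z, l2.map some, ?_, tri_option_up htri⟩
    rw [hrest, hLv, hdec]
    simp
  · -- backward
    intro hcase
    constructor
    · intro z hz hdesc
      exact hyZ ((descT hOnly hYcl hdesc) ▸ hz)
    intro p hif
    rw [blockedBy_iff_lblk]
    obtain ⟨w, l, hpdec, hEwt⟩ := (intoFirst_iff p).1 hif
    rcases l with _ | ⟨z1, l'⟩
    · have h0 := p.last_eq
      rw [hpdec] at h0; simp at h0
      rw [h0] at hEwt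
      exact absurd hEwt (hYcl _)
    by_cases hwZ : w ∈ Z
    · refine ⟨[], M.t, w, z1, l', hpdec, Or.inl ⟨?_, hwZ⟩⟩
      rintro ⟨hEtw, -⟩
      exact hyZ ((hOnly _ hEtw) ▸ hwZ)
    rcases hcase with ha | ⟨xt, hxt, hxtZ, V0, hV0, hds⟩
    · exact absurd (ha hEwt) hwZ
    have hxtt : xt ≠ M.t := edge_ne hacy hxt
    by_cases hxtp : xt ∈ p.nodes
    · -- xt occurs on p
      obtain ⟨P, Q, hPQ⟩ := List.append_of_mem hxtp
      have hndK : (xt :: Q).Nodup := (hPQ ▸ p.nodup).of_append_right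
      have hlastK : (xt :: Q).getLast? = some M.y := by
        have h0 := p.last_eq; rw [hPQ, Stmt4Aux.getLast?_append_ne (by simp)] at h0
        exact h0
      have hchK : List.Chain' (Adj M.E) (xt :: Q) := p.chain.suffix ⟨P, hPQ.symm⟩
      set q : GPath (subEdge M.E xt V0) (none : Option V) (some M.y) :=
        ⟨none :: (xt :: Q).map some,
         List.nodup_cons.2 ⟨by simp, List.Nodup.map (Option.some_injective V) hndK⟩,
         by simp,
         rfl,
         by rw [Stmt4Aux.getLast?_cons_ne none (by simp), List.getLast?_map, hlastK]; rfl,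
         by
           refine List.isChain_cons.2 ⟨?_, ?_⟩
           · intro o ho
             simp at ho
             rw [← ho]
             exact Or.inr (Or.inl rfl)
           · exact (List.isChain_map some).2 (hchK.imp (fun a b h => h))⟩ with hq
      have hblkq := (blockedBy_iff_lblk q).1 (hds q)
      obtain ⟨l1, x, v, z, l2, hdec, htri⟩ := hblkq
      have hdec' : (none : Option V) :: (xt :: Q).map some = l1 ++ x :: v :: z :: l2 := hdec
      rcases l1 with _ | ⟨o1, l1'⟩
      · simp only [List.nil_append] at hdec'
        have hx : x = none := by
          have h9 := congrArg List.head? hdec'; simp at h9; exact h9.symm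
        have hv : v = some xt := by
          have h9 := congrArg (fun L : List (Option V) => L[1]?) hdec'
          simp at h9; exact h9.symm
        subst hx; subst hv
        rcases htri with ⟨-, hvS⟩ | ⟨⟨hxv, -⟩, -, -⟩
        · rcases mem_image_some.1 hvS with h | h
          · exact absurd h hxtZ
          · exact absurd (by simpa using h) hxtt
        · exact absurd hxv (fun hh => hh)
      · have ho1 : o1 = none := by
          have h9 := congrArg List.head? hdec'; simp at h9; exact h9.symm
        have hM : (xt :: Q).map some = l1' ++ x :: v :: z :: l2 := by
          have := congrArg List.tail hdec'; simpa using this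
        obtain ⟨m1, a, b, c, m2, hKdec, -, hxa, hvb, hzc, -⟩ := Stmt4Aux.map_some_decomp hM
        subst hxa; subst hvb; subst hzc
        have htriE := tri_option_down htri
        have hb : b ≠ M.t :=
          head_unique (m1 := P ++ m1) (m2 := m2) (a := a) (c := c)
            p.nodup p.head_eq (by rw [hPQ, hKdec]; simp)
        exact ⟨P ++ m1, a, b, c, m2, by rw [hPQ, hKdec]; simp, tri_S_to_Z hb htriE⟩
    · -- xt not on p
      set q : GPath (subEdge M.E xt V0) (none : Option V) (some M.y) :=
        ⟨none :: some xt :: p.nodes.map some,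
         by
           refine List.nodup_cons.2 ⟨by simp, List.nodup_cons.2 ⟨?_, ?_⟩⟩
           · simpa using hxtp
           · exact List.Nodup.map (Option.some_injective V) p.nodup,
         by simp,
         rfl,
         by
           rw [Stmt4Aux.getLast?_cons_ne none (by
             rw [hpdec]; simp), Stmt4Aux.getLast?_cons_ne (some xt) (by rw [hpdec]; simp),
             List.getLast?_map, p.last_eq]
           rfl,
         by
           refine List.isChain_cons.2 ⟨?_, List.isChain_cons.2 ⟨?_, ?_⟩⟩
           · intro o ho
             simp at ho
             rw [← ho]
             exact Or.inr (Or.inl rfl)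
           · intro o ho
             rw [hpdec] at ho
             simp at ho
             rw [← ho]
             exact Or.inl hxt
           · exact (List.isChain_map some).2 (p.chain.imp (fun a b h => h))⟩ with hq
      have hblkq := (blockedBy_iff_lblk q).1 (hds q)
      obtain ⟨l1, x, v, z, l2, hdec, htri⟩ := hblkq
      have hdec' : (none : Option V) :: some xt :: p.nodes.map some =
          l1 ++ x :: v :: z :: l2 := hdec
      rcases l1 with _ | ⟨o1, l1'⟩
      · simp only [List.nil_append] at hdec'
        have hx : x = none := by
          have h9 := congrArg List.head? hdec'; simp at h9; exact h9.symm
        have hv : v = some xt := by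
          have h9 := congrArg (fun L : List (Option V) => L[1]?) hdec'
          simp at h9; exact h9.symm
        subst hx; subst hv
        rcases htri with ⟨-, hvS⟩ | ⟨⟨hxv, -⟩, -, -⟩
        · rcases mem_image_some.1 hvS with h | h
          · exact absurd h hxtZ
          · exact absurd (by simpa using h) hxtt
        · exact absurd hxv (fun hh => hh)
      rcases l1' with _ | ⟨o2, l1''⟩
      · -- l1 = [o1] : v = some M.t
        have ho1 : o1 = none := by
          have h9 := congrArg List.head? hdec'; simp at h9; exact h9.symm
        have hM : some xt :: p.nodes.map some = x :: v :: z :: l2 := by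
          have := congrArg List.tail hdec'; simpa using this
        have hx : x = some xt := by
          have h9 := congrArg List.head? hM; simp at h9; exact h9.symm
        have hv : v = some M.t := by
          have h9 := congrArg (fun L : List (Option V) => L[1]?) hM
          rw [hpdec] at h9
          simp at h9; exact h9.symm
        have hz : z = some w := by
          have h9 := congrArg (fun L : List (Option V) => L[2]?) hM
          rw [hpdec] at h9
          simp at h9; exact h9.symm
        subst hx; subst hv; subst hz
        rcases htri with ⟨hnc, -⟩ | ⟨-, hvS, -⟩
        · exact absurd ⟨hxt, hEwt⟩ hnc
        · exact absurd (mem_image_some.2 (show M.t ∈ Z ∪ {M.t} from Or.inr rfl)) hvS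
      · -- triple inside p
        have hM : p.nodes.map some = l1'' ++ x :: v :: z :: l2 := by
          have h1 := congrArg List.tail hdec'
          simp only [List.cons_append, List.tail_cons] at h1
          have h2 := congrArg List.tail h1
          simpa using h2
        obtain ⟨m1, a, b, c, m2, hKdec, -, hxa, hvb, hzc, -⟩ := Stmt4Aux.map_some_decomp hM
        subst hxa; subst hvb; subst hzc
        have htriE := tri_option_down htri
        have hb : b ≠ M.t := head_unique p.nodup p.head_eq hKdec
        exact ⟨m1, a, b, c, m2, hKdec, tri_S_to_Z hb htriE⟩
end

section
/- Let G be a semi-Markovian DAG satisfying Assumption 1. Let x_t ∈ X^(o) be a node that has either a directed edge x_t → t or a bi-directed edge to t (i.e., some unobserved node u with edges u → x_t and u → t), and let Z ⊆ X^(o) \ {x_t}. If Z does not satisfy the back-door criterion relative to (t, y) in G, then there exists a path between x_t and y in G that is not blocked by Z ∪ {t}. -/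
namespace CausalDAG

variable {V : Type*}

section Aux

variable {E : V → V → Prop} {a b : V}

lemma aux_get?_adj {l : List V} (hc : l.Chain' (Adj E)) {i : ℕ} {x y : V}
    (hx : l[i]? = some x) (hy : l[(i + 1)]? = some y) : Adj E x y := by
  rw [List.Chain', List.isChain_iff_getElem] at hc
  simp only [List.getElem?_eq_some_iff] at hx hy
  obtain ⟨h2, e2⟩ := hy
  obtain ⟨h1, e1⟩ := hx
  have h3 : i < l.length - 1 := by omega
  have := hc i (by omega)
  rwa [e1, e2] at this

lemma aux_nodup_inj {l : List V} (h : l.Nodup) {i j : ℕ} {v : V}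
    (hi : l[i]? = some v) (hj : l[j]? = some v) : i = j := by
  have hlt : i < l.length := (List.getElem?_eq_some_iff.mp hi).1
  exact (List.getElem?_inj hlt h).mp (hi.trans hj.symm)

lemma aux_get?_exists {l : List V} {i : ℕ} (h : i < l.length) :
    ∃ v, l[i]? = some v :=
  ⟨l[i], by simp⟩

lemma aux_get?_lt {l : List V} {i : ℕ} {v : V} (h : l[i]? = some v) :
    i < l.length := by
  exact (List.getElem?_eq_some_iff.mp h).1

/-- Prepend a node to a path. -/
def GPath.cons (p : GPath E a b) (x : V) (hadj : Adj E x a) (hx : x ∉ p.nodes) :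
    GPath E x b where
  nodes := x :: p.nodes
  nodup := List.nodup_cons.mpr ⟨hx, p.nodup⟩
  two_le := by have := p.two_le; simp only [List.length_cons]; omega
  head_eq := rfl
  last_eq := by
    rw [show x :: p.nodes = [x] ++ p.nodes from rfl, List.getLast?_append, p.last_eq]
    rfl
  chain := by
    rw [List.Chain', List.isChain_cons]
    refine ⟨?_, p.chain⟩
    intro z hz
    rw [p.head_eq] at hz
    cases hz
    exact hadj

/-- Take the suffix of a path starting at position `j`. -/
def GPath.suffix (p : GPath E a b) (j : ℕ) (c : V) (hc : p.nodes[j]? = some c)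
    (hj : j + 2 ≤ p.nodes.length) : GPath E c b where
  nodes := p.nodes.drop j
  nodup := p.nodup.sublist (List.drop_sublist j p.nodes)
  two_le := by have := p.two_le; rw [List.length_drop]; omega
  head_eq := by
    rw [List.head?_eq_getElem?, List.getElem?_drop]
    simpa using hc
  last_eq := by
    rw [List.getLast?_eq_getElem?, List.length_drop, List.getElem?_drop,
      show j + (p.nodes.length - j - 1) = p.nodes.length - 1 by omega,
      ← List.getLast?_eq_getElem?]
    exact p.last_eq
  chain := p.chain.drop j

/-- Transfer lemma: if position `i ≥ k + 1` of `q` corresponds (with shift) to a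
position of the unblocked path `p`, then `q` is not blocked there by `Z ∪ {t}`. -/
lemma aux_transfer {t y a : V} {Z : Set V}
    (p : GPath E t y) (q : GPath E a y) (j k : ℕ)
    (hjk : ∀ i, q.nodes[(k + i)]? = p.nodes[(j + i)]?)
    (hlen : q.nodes.length = k + (p.nodes.length - j))
    (hjlen : j < p.nodes.length)
    (hp : ¬ p.BlockedBy Z)
    (i : ℕ) (v : V) (hi : q.Interior i) (hik : k + 1 ≤ i)
    (hv : q.nodes[i]? = some v)
    (hblk : (¬ q.ColliderAt i ∧ v ∈ Z ∪ {t}) ∨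
      (q.ColliderAt i ∧ v ∉ Z ∪ {t} ∧ ∀ d, Descendant E v d → d ∉ Z ∪ {t})) :
    False := by
  obtain ⟨hi0, hi1⟩ := hi
  set m := j + (i - k) with hm_def
  have hm : p.nodes[m]? = some v := by
    have := hjk (i - k)
    rw [show k + (i - k) = i by omega] at this
    rw [← this]; exact hv
  have hm1 : 0 < m := by omega
  have hm2 : m + 1 < p.nodes.length := by
    rw [hlen] at hi1; omega
  have ht0 : p.nodes[0]? = some t := by
    rw [← List.head?_eq_getElem?]
    exact p.head_eq
  have hvt : v ≠ t := by
    intro h; subst h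
    have := aux_nodup_inj p.nodup hm ht0
    omega
  have e1 : q.nodes[(i - 1)]? = p.nodes[(m - 1)]? := by
    have := hjk (i - 1 - k)
    rw [show k + (i - 1 - k) = i - 1 by omega, show j + (i - 1 - k) = m - 1 by omega] at this
    exact this
  have e2 : q.nodes[i]? = p.nodes[m]? := by rw [hv, hm]
  have e3 : q.nodes[(i + 1)]? = p.nodes[(m + 1)]? := by
    have := hjk (i + 1 - k)
    rw [show k + (i + 1 - k) = i + 1 by omega, show j + (i + 1 - k) = m + 1 by omega] at this
    exact this
  have hcoll : q.ColliderAt i ↔ p.ColliderAt m := by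
    unfold GPath.ColliderAt
    rw [e1, e2, e3]
  apply hp
  refine ⟨m, v, ⟨hm1, hm2⟩, hm, ?_⟩
  rcases hblk with ⟨hnc, hvS⟩ | ⟨hc, hvS, hd⟩
  · refine Or.inl ⟨fun h => hnc (hcoll.mpr h), ?_⟩
    rcases hvS with h | h
    · exact h
    · exact absurd h hvt
  · exact Or.inr ⟨hcoll.mp hc, fun h => hvS (Or.inl h),
      fun d hdd hdZ => hd d hdd (Or.inl hdZ)⟩

end Aux

end CausalDAG

open CausalDAG in
/-- if `Z` does not satisfy the back-door criterion, then there is a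
path between `x_t` and `y` in `G` not blocked by `Z ∪ {t}`. -/
theorem stmt6 {V : Type*} [Finite V] (M : SemiMarkov V)
    (hA1 : Assumption1 M)
    (xt : V) (hxt : xt ∈ M.Xo)
    (hedge : M.E xt M.t ∨ ∃ u ∈ M.Xu, M.E u xt ∧ M.E u M.t)
    (Z : Set V) (hZ : Z ⊆ M.Xo \ {xt})
    (hnb : ¬ BackDoor M.E M.t M.y Z) :
    ∃ p : GPath M.E xt M.y, ¬ p.BlockedBy (Z ∪ {M.t}) := by
  obtain ⟨hEty, hchild, hysink⟩ := hA1
  -- the only descendant of `t` is `y`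
  have hdesc : ∀ d, Descendant M.E M.t d → d = M.y := by
    intro d hd
    induction hd with
    | single h => exact hchild _ h
    | tail h1 h ih => subst ih; exact absurd h (hysink _)
  have hBD1 : ∀ z ∈ Z, ¬ Descendant M.E M.t z := by
    intro z hz hd
    have h := hdesc z hd; subst h
    exact M.y_notin (Or.inl (hZ hz).1)
  obtain ⟨p, hinto, hpunb⟩ : ∃ p : GPath M.E M.t M.y, p.IntoFirst ∧ ¬ p.BlockedBy Z := by
    by_contra h
    push_neg at h
    exact hnb ⟨hBD1, h⟩
  obtain ⟨w, hw, hwt⟩ := hinto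
  have hlen2 := p.two_le
  have ht0 : p.nodes[0]? = some M.t := by
    rw [← List.head?_eq_getElem?]; exact p.head_eq
  have hyl : p.nodes[(p.nodes.length - 1)]? = some M.y := by
    rw [← List.getLast?_eq_getElem?]; exact p.last_eq
  have hxtt_ne : xt ≠ M.t := fun h => M.t_notin (Or.inl (h ▸ hxt))
  by_cases hxp : xt ∈ p.nodes
  · -- CASE A : take the suffix of p starting at xt
    obtain ⟨j, hj⟩ := List.mem_iff_getElem?.mp hxp
    have hj' : p.nodes[j]? = some xt := by exact hj
    have hjlt : j < p.nodes.length := aux_get?_lt hj'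
    have hj0 : j ≠ 0 := by
      intro h; subst h
      exact hxtt_ne (Option.some.inj (hj'.symm.trans ht0))
    have hjlast : j + 1 ≠ p.nodes.length := by
      intro h
      have hj'' : p.nodes[(p.nodes.length - 1)]? = some xt := by
        rw [show p.nodes.length - 1 = j by omega]; exact hj'
      have : xt = M.y := Option.some.inj (hj''.symm.trans hyl)
      exact M.y_notin (Or.inl (this ▸ hxt))
    have hj2 : j + 2 ≤ p.nodes.length := by omega
    refine ⟨p.suffix j xt hj' hj2, ?_⟩
    rintro ⟨i, v, hi, hv, hblk⟩
    have hjk : ∀ i, (p.suffix j xt hj' hj2).nodes[(0 + i)]? = p.nodes[(j + i)]? := by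
      intro i
      simp [GPath.suffix, List.getElem?_drop]
    have hlen : (p.suffix j xt hj' hj2).nodes.length = 0 + (p.nodes.length - j) := by
      simp [GPath.suffix]
    exact aux_transfer p _ j 0 hjk hlen hjlt hpunb i v hi hi.1 hv hblk
  · rcases hedge with hxtt | ⟨u, hu, hux, hut⟩
    · -- CASE B1 : prepend xt → t
      refine ⟨p.cons xt (Or.inl hxtt) hxp, ?_⟩
      set q := p.cons xt (Or.inl hxtt) hxp with hq
      rintro ⟨i, v, hi, hv, hblk⟩
      have hqn : q.nodes = xt :: p.nodes := rfl
      have hjk : ∀ i, q.nodes[(1 + i)]? = p.nodes[(0 + i)]? := by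
        intro i
        rw [hqn, Nat.add_comm 1 i, Nat.zero_add]
        exact List.getElem?_cons_succ
      rcases Nat.lt_or_ge i 2 with h2 | h2
      · have hi1 : i = 1 := by have := hi.1; omega
        subst hi1
        have hq1 : q.nodes[1]? = some M.t := by rw [hqn]; exact ht0
        have hq2 : q.nodes[2]? = some w := by rw [hqn]; exact hw
        have hcol : q.ColliderAt 1 :=
          ⟨xt, M.t, w, by rw [hqn]; rfl, hq1, hq2, hxtt, hwt⟩
        have hvt : v = M.t := Option.some.inj (hv.symm.trans hq1)
        rcases hblk with ⟨hnc, _⟩ | ⟨_, hns, _⟩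
        · exact hnc hcol
        · exact hns (Or.inr (Set.mem_singleton_iff.mpr hvt))
      · have hlen : q.nodes.length = 1 + (p.nodes.length - 0) := by
          rw [hqn, List.length_cons]; omega
        exact aux_transfer p q 0 1 hjk hlen (by omega) hpunb i v hi h2 hv hblk
    · -- CASE B2 : prepend xt ← u → t
      have hut_ne : u ≠ M.t := fun h => M.t_notin (Or.inr (h ▸ hu))
      have hunotp : u ∉ p.nodes := by
        intro hup
        obtain ⟨j, hju⟩ := List.mem_iff_getElem?.mp hup
        have hju' : p.nodes[j]? = some u := by exact hju
        have hjlt : j < p.nodes.length := aux_get?_lt hju'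
        have hj0 : j ≠ 0 := by
          intro h; subst h
          exact hut_ne (Option.some.inj (hju'.symm.trans ht0))
        have hjl : j + 1 ≠ p.nodes.length := by
          intro h
          have hj'' : p.nodes[(p.nodes.length - 1)]? = some u := by
            rw [show p.nodes.length - 1 = j by omega]; exact hju'
          have : u = M.y := Option.some.inj (hj''.symm.trans hyl)
          exact M.y_notin (Or.inr (this ▸ hu))
        obtain ⟨prev, hprev⟩ := aux_get?_exists (l := p.nodes) (i := j - 1) (by omega)
        obtain ⟨next, hnext⟩ := aux_get?_exists (l := p.nodes) (i := j + 1) (by omega)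
        have hadj1 : Adj M.E prev u := aux_get?_adj p.chain hprev
          (by rw [show j - 1 + 1 = j by omega]; exact hju')
        have hadj2 : Adj M.E u next := aux_get?_adj p.chain hju' hnext
        have hEup : M.E u prev := hadj1.resolve_left (M.unobs_no_parents u hu prev)
        have hEun : M.E u next := hadj2.resolve_right (M.unobs_no_parents u hu next)
        obtain ⟨A, B, hAB⟩ := M.unobs_children u hu
        have hpn : prev ≠ next := by
          intro h
          have := aux_nodup_inj p.nodup hprev (h ▸ hnext)
          omega
        have h1 := hAB prev hEup
        have h2 := hAB next hEun
        have h3 := hAB xt hux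
        have hmem : xt = prev ∨ xt = next := by
          rcases h1 with rfl | rfl <;> rcases h2 with h2 | h2 <;>
            rcases h3 with h3 | h3 <;> simp_all
        have hprevm : prev ∈ p.nodes := List.mem_of_getElem? hprev
        have hnextm : next ∈ p.nodes := List.mem_of_getElem? hnext
        rcases hmem with h | h
        · exact hxp (h ▸ hprevm)
        · exact hxp (h ▸ hnextm)
      have hxu_ne : xt ≠ u := fun h =>
        Set.disjoint_left.mp M.disjoint hxt (h ▸ hu)
      have hxtq : xt ∉ (p.cons u (Or.inl hut) hunotp).nodes := by
        intro h
        rcases List.mem_cons.mp h with h | h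
        · exact hxu_ne h
        · exact hxp h
      refine ⟨(p.cons u (Or.inl hut) hunotp).cons xt (Or.inr hux) hxtq, ?_⟩
      set q := (p.cons u (Or.inl hut) hunotp).cons xt (Or.inr hux) hxtq with hq
      rintro ⟨i, v, hi, hv, hblk⟩
      have hqn : q.nodes = xt :: u :: p.nodes := rfl
      have hjk : ∀ i, q.nodes[(2 + i)]? = p.nodes[(0 + i)]? := by
        intro i
        rw [hqn, Nat.add_comm 2 i, Nat.zero_add]
        rfl
      rcases Nat.lt_or_ge i 3 with h3 | h3
      · have hq0 : q.nodes[0]? = some xt := by rw [hqn]; rfl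
        have hq1 : q.nodes[1]? = some u := by rw [hqn]; rfl
        have hq2 : q.nodes[2]? = some M.t := by rw [hqn]; exact ht0
        have hq3 : q.nodes[3]? = some w := by rw [hqn]; exact hw
        have hi1 : i = 1 ∨ i = 2 := by have := hi.1; omega
        rcases hi1 with rfl | rfl
        · -- position 1 : the node u, a non-collider not in Z ∪ {t}
          have hvu : v = u := Option.some.inj (hv.symm.trans hq1)
          rcases hblk with ⟨_, hvS⟩ | ⟨hc, _, _⟩
          · rcases hvS with h | h
            · have hvo : v ∈ M.Xo := (hZ h).1
              rw [hvu] at hvo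
              exact Set.disjoint_left.mp M.disjoint hvo hu
            · have hvt : v = M.t := h
              rw [hvu] at hvt
              exact hut_ne hvt
          · obtain ⟨x, v', z, hx0, hv1, _, hExv, _⟩ := hc
            have hx : x = xt := Option.some.inj (hx0.symm.trans hq0)
            have hv' : v' = u := Option.some.inj (hv1.symm.trans hq1)
            rw [hx, hv'] at hExv
            exact M.unobs_no_parents u hu xt hExv
        · -- position 2 : the node t, a collider in Z ∪ {t}
          have hcol : q.ColliderAt 2 := ⟨u, M.t, w, hq1, hq2, hq3, hut, hwt⟩
          have hvt : v = M.t := Option.some.inj (hv.symm.trans hq2)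
          rcases hblk with ⟨hnc, _⟩ | ⟨_, hns, _⟩
          · exact hnc hcol
          · exact hns (Or.inr (Set.mem_singleton_iff.mpr hvt))
      · have hlen : q.nodes.length = 2 + (p.nodes.length - 0) := by
          rw [hqn, List.length_cons, List.length_cons]; omega
        exact aux_transfer p q 0 2 hjk hlen (by omega) hpunb i v hi h3 hv hblk
end

section
/- Let G be a semi-Markovian DAG satisfying Assumption 1 and let Z ⊆ X^(o). If there exists a path between t and y in G not containing the edge t → y that is not blocked by Z ∪ {t}, then there exists a path between t and y in G not containing the edge t → y that is not blocked by Z. -/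
namespace Stmt13Aux
open CausalDAG

variable {V : Type*}

/-- Collider condition at index `i` of a raw node list. -/
def ColAt (E : V → V → Prop) (l : List V) (i : ℕ) : Prop :=
  ∃ x v z, l[(i - 1)]? = some x ∧ l[i]? = some v ∧
    l[(i + 1)]? = some z ∧ E x v ∧ E z v

/-- Blocking condition at index `i` of a raw node list. -/
def BlkAt (E : V → V → Prop) (Z : Set V) (l : List V) (i : ℕ) : Prop :=
  ∃ v, (0 < i ∧ i + 1 < l.length) ∧ l[i]? = some v ∧
    ((¬ ColAt E l i ∧ v ∈ Z) ∨ (ColAt E l i ∧ v ∉ Z ∧ ∀ d, Descendant E v d → d ∉ Z))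

lemma blockedBy_iff {E : V → V → Prop} {a b : V} (p : GPath E a b) (Z : Set V) :
    p.BlockedBy Z ↔ ∃ i, BlkAt E Z p.nodes i := by
  constructor
  · rintro ⟨i, v, hi, hv, hc⟩; exact ⟨i, v, hi, hv, hc⟩
  · rintro ⟨i, v, hi, hv, hc⟩; exact ⟨i, v, hi, hv, hc⟩

lemma colAt_cons {E : V → V → Prop} (a : V) (l : List V) (j : ℕ) :
    ColAt E (a :: l) (j + 2) ↔ ColAt E l (j + 1) := by
  simp [ColAt, List.getElem?_cons_succ]

lemma colAt_drop {E : V → V → Prop} (l : List V) (n j : ℕ) :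
    ColAt E (l.drop n) (j + 1) ↔ ColAt E l (n + j + 1) := by
  have h1 : (l.drop n)[j]? = l[(n + j)]? := List.getElem?_drop
  have h2 : (l.drop n)[(j + 1)]? = l[(n + j + 1)]? := by
    rw [List.getElem?_drop, ← Nat.add_assoc]
  have h3 : (l.drop n)[(j + 2)]? = l[(n + j + 2)]? := by
    rw [List.getElem?_drop, ← Nat.add_assoc]
  have h4 : n + j + 1 - 1 = n + j := by omega
  have h5 : n + j + 1 + 1 = n + j + 2 := by omega
  simp only [ColAt, Nat.add_sub_cancel, h1, h2, h3, h4, h5]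

lemma open_drop {E : V → V → Prop} {Z : Set V} {s : List V} {n : ℕ}
    (hopen : ∀ i, n < i → ¬ BlkAt E Z s i) :
    ∀ i, ¬ BlkAt E Z (s.drop n) i := by
  rintro i ⟨v, ⟨hi0, hil⟩, hv, hc⟩
  obtain ⟨j, rfl⟩ : ∃ j, i = j + 1 := ⟨i - 1, by omega⟩
  have hlen : (s.drop n).length = s.length - n := List.length_drop
  have hv' : s[(n + j + 1)]? = some v := by
    rw [← hv, List.getElem?_drop, ← Nat.add_assoc]
  refine hopen (n + j + 1) (by omega) ⟨v, ⟨by omega, by omega⟩, hv', ?_⟩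
  rcases hc with ⟨hnc, hz⟩ | ⟨hcol, hz⟩
  · exact Or.inl ⟨fun hcol' => hnc ((colAt_drop s n j).mpr hcol'), hz⟩
  · exact Or.inr ⟨(colAt_drop s n j).mp hcol, hz⟩

lemma open_cons {E : V → V → Prop} {Z : Set V} {w a : V} {s : List V}
    (hac : Acyclic E) (hhd : s.head? = some a) (hEaw : E a w) (haZ : a ∉ Z)
    (hopen : ∀ i, ¬ BlkAt E Z s i) :
    ∀ i, ¬ BlkAt E Z (w :: s) i := by
  rintro i ⟨v, ⟨hi0, hil⟩, hv, hc⟩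
  match i, hi0 with
  | 1, _ =>
    have hva : v = a := by
      rw [show (w :: s)[1]? = s[0]? from rfl, ← List.head?_eq_getElem?, hhd] at hv
      exact (Option.some_injective _ hv).symm
    have hnc : ¬ ColAt E (w :: s) 1 := by
      rintro ⟨x, v', z, h1, h2, h3, e1, e2⟩
      rw [show (1:ℕ) - 1 = 0 from rfl, List.getElem?_cons_zero] at h1
      obtain rfl : w = x := Option.some_injective _ h1
      exact hac a ((Relation.TransGen.single hEaw).tail
        (by rw [show (w :: s)[1]? = s[0]? from rfl, ← List.head?_eq_getElem?, hhd] at h2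
            obtain rfl : a = v' := Option.some_injective _ h2
            exact e1))
    rcases hc with ⟨_, hz⟩ | ⟨hcol, _⟩
    · exact haZ (hva ▸ hz)
    · exact hnc hcol
  | (j+2), _ =>
    have hv' : s[(j + 1)]? = some v := by rw [← hv, List.getElem?_cons_succ]
    have hlen : (w :: s).length = s.length + 1 := rfl
    refine hopen (j + 1) ⟨v, ⟨by omega, by omega⟩, hv', ?_⟩
    rcases hc with ⟨hnc, hz⟩ | ⟨hcol, hz⟩
    · exact Or.inl ⟨fun hcol' => hnc ((colAt_cons w s j).mpr hcol'), hz⟩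
    · exact Or.inr ⟨(colAt_cons w s j).mp hcol, hz⟩

lemma key {E : V → V → Prop} {Z : Set V} {t y c : V}
    (hac : Acyclic E) (hyc : ∀ w, ¬ E y w)
    (hcZ : c ∉ Z) (hcd : ∀ d, Relation.TransGen E c d → d ∉ Z) :
    ∀ (a : V), Relation.TransGen E a t →
      (a = c ∨ Relation.TransGen E c a) →
      ∀ s : List V, s.Chain' (Adj E) → s.Nodup → s.head? = some a →
        s.getLast? = some y → 2 ≤ s.length → t ∉ s →
        (∀ i, ¬ BlkAt E Z s i) →
        ∃ q : GPath E t y, ¬ q.UsesEdge t y ∧ ¬ q.BlockedBy Z := by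
  intro a ha
  induction ha using Relation.TransGen.head_induction_on with
  | single h =>
    rename_i b
    intro hdesc s hch hnd hhd hlast hlen hts hopen
    have hbZ : b ∉ Z := by rcases hdesc with rfl | hd; exacts [hcZ, hcd b hd]
    have hby : b ≠ y := fun e => hyc t (e ▸ h)
    have hlast' : (t :: s).getLast? = some y := by
      cases s with
      | nil => simp at hlen
      | cons x xs => rw [List.getLast?_cons_cons]; exact hlast
    have hchain : (t :: s).Chain' (Adj E) := by
      refine List.isChain_cons.mpr ⟨?_, hch⟩
      intro z hz
      rw [hhd] at hz
      obtain rfl := Option.mem_some_iff.mp hz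
      exact Or.inr h
    refine ⟨⟨t :: s, List.nodup_cons.mpr ⟨hts, hnd⟩, by simp; omega, rfl, hlast', hchain⟩,
      ?_, ?_⟩
    · rintro ⟨hE, i, ⟨hit, hiy⟩ | ⟨hiy, hit⟩⟩
      · match i, hit, hiy with
        | 0, hit, hiy =>
          rw [List.getElem?_cons_succ, ← List.head?_eq_getElem?, hhd] at hiy
          exact hby (Option.some_injective _ hiy)
        | (j+1), hit, hiy =>
          rw [List.getElem?_cons_succ] at hit
          exact hts (List.mem_of_getElem? hit)
      · rw [List.getElem?_cons_succ] at hit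
        exact hts (List.mem_of_getElem? hit)
    · rw [blockedBy_iff]
      rintro ⟨i, hblk⟩
      exact open_cons hac hhd h hbZ hopen i hblk
  | head h' htg IH =>
    rename_i b b'
    intro hdesc s hch hnd hhd hlast hlen hts hopen
    have hdesc' : b' = c ∨ Relation.TransGen E c b' := by
      rcases hdesc with rfl | hd
      · exact Or.inr (Relation.TransGen.single h')
      · exact Or.inr (hd.tail h')
    have hbZ : b ∉ Z := by rcases hdesc with rfl | hd; exacts [hcZ, hcd b hd]
    have hb't : b' ≠ t := fun e => hac t (e ▸ htg)
    have hb'y : b' ≠ y := by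
      obtain ⟨z, h0, -⟩ := Relation.TransGen.head'_iff.mp htg
      exact fun e => hyc _ (e ▸ h0)
    by_cases hmem : b' ∈ s
    · obtain ⟨i0, hi0⟩ := List.mem_iff_getElem?.mp hmem
      have hi0lt : i0 < s.length := by
        by_contra hn
        rw [List.getElem?_eq_none_iff.mpr (le_of_not_gt hn)] at hi0; cases hi0
      have hy' : s[(s.length - 1)]? = some y := by
        rw [← List.getLast?_eq_getElem?]; exact hlast
      have hi0ne : i0 ≠ s.length - 1 := by
        intro e; rw [e, hy'] at hi0
        exact hb'y (Option.some_injective _ hi0).symm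
      have hi0pos : 0 < i0 := by
        rcases Nat.eq_zero_or_pos i0 with rfl | h0
        · rw [← List.head?_eq_getElem?, hhd] at hi0
          have e : b = b' := Option.some_injective _ hi0
          exact (hac b (Relation.TransGen.single (by rwa [← e] at h'))).elim
        · exact h0
      have hhd' : (s.drop i0).head? = some b' := by
        rw [List.head?_eq_getElem?, List.getElem?_drop, Nat.add_zero]; exact hi0
      have hlast' : (s.drop i0).getLast? = some y := by
        rw [List.getLast?_eq_getElem?, List.getElem?_drop, List.length_drop]
        rw [show i0 + (s.length - i0 - 1) = s.length - 1 by omega]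
        exact hy'
      refine IH hdesc' (s.drop i0) (hch.drop i0)
        ((List.drop_sublist i0 s).nodup hnd) hhd' hlast'
        (by rw [List.length_drop]; omega)
        (fun hm => hts (List.mem_of_mem_drop hm))
        (open_drop (fun i _ => hopen i))
    · refine IH hdesc' (b' :: s) ?_ (List.nodup_cons.mpr ⟨hmem, hnd⟩) rfl ?_
        (by simp; omega) ?_ ?_
      · refine List.isChain_cons.mpr ⟨?_, hch⟩
        intro z hz; rw [hhd] at hz
        obtain rfl := Option.mem_some_iff.mp hz
        exact Or.inr h'
      · cases s with
        | nil => simp at hlen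
        | cons x xs => rw [List.getLast?_cons_cons]; exact hlast
      · rw [List.mem_cons]
        rintro (e | hm); exacts [hb't e.symm, hts hm]
      · exact open_cons hac hhd h' hbZ hopen

end Stmt13Aux


open CausalDAG in
/-- under Assumption 1, if some path between `t` and `y` not
containing the edge `t → y` is not blocked by `Z ∪ {t}`, then some path between
`t` and `y` not containing the edge `t → y` is not blocked by `Z`. -/
theorem stmt13 {V : Type*} [Finite V] (M : SemiMarkov V)
    (hA1 : Assumption1 M)
    (Z : Set V) (hZ : Z ⊆ M.Xo)
    (h : ∃ p : GPath M.E M.t M.y, ¬ p.UsesEdge M.t M.y ∧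
      ¬ p.BlockedBy (Z ∪ {M.t})) :
    ∃ p : GPath M.E M.t M.y, ¬ p.UsesEdge M.t M.y ∧ ¬ p.BlockedBy Z := by
    classical
  obtain ⟨p, hpe, hpu⟩ := h
  by_cases hb : p.BlockedBy Z
  · rw [Stmt13Aux.blockedBy_iff] at hb
    obtain ⟨i₀, hBi₀⟩ := hb
    set P : ℕ → Prop := fun i => Stmt13Aux.BlkAt M.E Z p.nodes i with hP
    have hi₀le : i₀ ≤ p.nodes.length := by
      obtain ⟨v, ⟨_, hl⟩, _, _⟩ := hBi₀; omega
    set k := Nat.findGreatest P p.nodes.length with hk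
    have hPk : P k := Nat.findGreatest_spec hi₀le hBi₀
    have hmax : ∀ i, k < i → ¬ P i := by
      intro i hi hPi
      by_cases hle : i ≤ p.nodes.length
      · exact Nat.findGreatest_is_greatest hi hle hPi
      · obtain ⟨v, ⟨_, hl⟩, _, _⟩ := hPi; omega
    obtain ⟨c, ⟨hk0, hkl⟩, hkc, hcase⟩ := hPk
    have heady : p.nodes[0]? = some M.t := by
      rw [← List.head?_eq_getElem?]; exact p.head_eq
    have hct : c ≠ M.t := by
      intro e
      have : k = 0 := (List.getElem?_inj (by omega) p.nodup).mp (by rw [hkc, heady, e])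
      omega
    rcases hcase with ⟨hnc, hcZ⟩ | ⟨hcol, hcZ, hcd⟩
    · exact absurd ⟨k, c, ⟨hk0, hkl⟩, hkc, Or.inl ⟨hnc, Or.inl hcZ⟩⟩ hpu
    · have hdt : Relation.TransGen M.E c M.t := by
        by_contra hnd
        apply hpu
        refine ⟨k, c, ⟨hk0, hkl⟩, hkc, Or.inr ⟨hcol, ?_, ?_⟩⟩
        · rintro (h1 | h1); exacts [hcZ h1, hct h1]
        · intro d hd hdZ
          rcases hdZ with h1 | h1
          · exact hcd d hd h1
          · exact hnd ((show d = M.t from h1) ▸ hd)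
      have hts : M.t ∉ p.nodes.drop k := by
        intro hm
        obtain ⟨m, hm'⟩ := List.mem_iff_getElem?.mp hm
        rw [List.getElem?_drop] at hm'
        have hkm : k + m = 0 := (List.getElem?_inj (by
          by_contra hn
          rw [List.getElem?_eq_none_iff.mpr (le_of_not_gt hn)] at hm'
          cases hm') p.nodup).mp (by rw [hm', heady])
        omega
      have hhd' : (p.nodes.drop k).head? = some c := by
        rw [List.head?_eq_getElem?, List.getElem?_drop, Nat.add_zero]; exact hkc
      have hlast' : (p.nodes.drop k).getLast? = some M.y := by
        rw [List.getLast?_eq_getElem?, List.getElem?_drop, List.length_drop]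
        rw [show k + (p.nodes.length - k - 1) = p.nodes.length - 1 by omega]
        rw [← List.getLast?_eq_getElem?]; exact p.last_eq
      exact Stmt13Aux.key M.acyclic hA1.2.2 hcZ hcd c hdt (Or.inl rfl)
        (p.nodes.drop k) (p.chain.drop k)
        ((List.drop_sublist k p.nodes).nodup p.nodup) hhd' hlast'
        (by rw [List.length_drop]; omega)
        hts
        (Stmt13Aux.open_drop hmax)
  · exact ⟨p, hpe, hb⟩
end
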